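/- arXiv:1808.09719 — 6 statements merged into one kernel-verified Lean document; each statement's English description precedes it below -/
import Mathlib

section
/- Let (n_i)_{i≥1} be a sequence of integers with n_i ≥ 2 for all i, and let W = (W_1, W_2, W_3, …) be its J-word. If the averages (n_1 + ⋯ + n_k)/k tend to infinity as k → ∞, then the density of 1's among the terms of W equals 1; that is, lim_{N→∞} #{ j ≤ N : W_j = 1 } / N = 1. -/
/-- Given a sequence `n` (indexed from 1) of integers with `n i ≥ 2` for all `i ≥ 1`,
`W` (indexed from 1) is its J-word: the concatenation of blocks `B_1 B_2 B_3 ⋯`, where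
`B_1` consists of `n 1 - 1` copies of `1` followed by a single `2` and, for `i ≥ 2`,
`B_i` consists of `n i - 2` copies of `1` followed by a single `2`.  Equivalently,
`W j = 2` exactly when `j` is the position of the end of some block, i.e. when
`j = (n 1 + ⋯ + n k) - (k - 1)` for some `k ≥ 1`, and `W j = 1` otherwise. -/
def IsJWord (n : ℕ → ℤ) (W : ℕ → ℕ) : Prop :=
  ∀ j : ℕ, 1 ≤ j →
    ((∃ k : ℕ, 1 ≤ k ∧ (j : ℤ) = (∑ i ∈ Finset.Icc 1 k, n i) - ((k : ℤ) - 1)) → W j = 2) ∧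
    ((¬ ∃ k : ℕ, 1 ≤ k ∧ (j : ℤ) = (∑ i ∈ Finset.Icc 1 k, n i) - ((k : ℤ) - 1)) → W j = 1)

/-- If the partial quotient averages `(n_1 + ⋯ + n_k)/k` tend to infinity, then the
density of `1`'s among the terms of the J-word of `(n_i)` equals `1`. -/
theorem jword_density_of_ones (n : ℕ → ℤ) (hn : ∀ i : ℕ, 1 ≤ i → 2 ≤ n i)
    (W : ℕ → ℕ) (hW : IsJWord n W)
    (havg : Filter.Tendsto (fun k : ℕ => (∑ i ∈ Finset.Icc 1 k, (n i : ℝ)) / k)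
      Filter.atTop Filter.atTop) :
    Filter.Tendsto
      (fun N : ℕ => (((Finset.Icc 1 N).filter (fun j => W j = 1)).card : ℝ) / N)
      Filter.atTop (nhds 1) := by
  classical
  set S : ℕ → ℤ := fun k => (∑ i ∈ Finset.Icc 1 k, n i) - ((k : ℤ) - 1) with hSdef
  have hSge : ∀ k : ℕ, 1 ≤ k → (k : ℤ) + 1 ≤ S k := by
    intro k hk
    have h2 : (Finset.Icc 1 k).card • (2 : ℤ) ≤ ∑ i ∈ Finset.Icc 1 k, n i :=
      Finset.card_nsmul_le_sum _ _ _ (fun i hi => hn i (Finset.mem_Icc.mp hi).1)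
    have hcard : (Finset.Icc 1 k).card = k := by simp [Nat.card_Icc]
    rw [hcard, nsmul_eq_mul] at h2
    simp only [hSdef]
    have : (1:ℤ) ≤ (k:ℤ) := by exact_mod_cast hk
    linarith
  set c : ℕ → ℕ := fun N => ((Finset.Icc 1 N).filter (fun j => ¬ W j = 1)).card with hcdef
  have hcA : ∀ N : ℕ, c N ≤ ((Finset.Icc 1 N).filter (fun k => S k ≤ (N : ℤ))).card := by
    intro N
    refine le_trans (Finset.card_le_card ?_)
      (Finset.card_image_le (f := fun k => (S k).toNat)
        (s := (Finset.Icc 1 N).filter (fun k => S k ≤ (N : ℤ))))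
    intro j hj
    simp only [Finset.mem_filter, Finset.mem_Icc] at hj
    obtain ⟨⟨hj1, hjN⟩, hWj⟩ := hj
    have hex : ∃ k : ℕ, 1 ≤ k ∧ (j : ℤ) = S k := by
      by_contra h
      exact hWj ((hW j hj1).2 h)
    obtain ⟨k, hk1, hjk⟩ := hex
    have hSk := hSge k hk1
    refine Finset.mem_image.mpr ⟨k, ?_, ?_⟩
    · simp only [Finset.mem_filter, Finset.mem_Icc]
      refine ⟨⟨hk1, ?_⟩, ?_⟩ <;> omega
    · show (S k).toNat = j
      omega
  have hzero : Filter.Tendsto (fun N : ℕ => (c N : ℝ) / N) Filter.atTop (nhds 0) := by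
    rw [Metric.tendsto_atTop]
    intro ε hε
    obtain ⟨K, hK⟩ := Filter.eventually_atTop.mp (Filter.tendsto_atTop.mp havg (4 / ε + 2))
    set K0 := max K 1 with hK0
    have hSK : ∀ k : ℕ, K0 ≤ k → (4 / ε) * k ≤ (S k : ℝ) := by
      intro k hk
      have hk1 : 1 ≤ k := le_trans (le_max_right K 1) hk
      have hkpos : (0:ℝ) < k := by exact_mod_cast hk1
      have h1 := hK k (le_trans (le_max_left K 1) hk)
      rw [le_div_iff₀ hkpos] at h1
      have hcast : (S k : ℝ) = (∑ i ∈ Finset.Icc 1 k, (n i : ℝ)) - ((k:ℝ) - 1) := by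
        simp only [hSdef]; push_cast; ring
      rw [hcast]
      nlinarith
    obtain ⟨N0, hN0⟩ : ∃ N0 : ℕ, (4 * K0 / ε) < N0 := exists_nat_gt _
    refine ⟨max N0 1, fun N hN => ?_⟩
    have hN1 : 1 ≤ N := le_trans (le_max_right N0 1) hN
    have hNpos : (0:ℝ) < N := by exact_mod_cast hN1
    have hNN0 : (N0:ℝ) ≤ N := by exact_mod_cast le_trans (le_max_left N0 1) hN
    have hsub : (Finset.Icc 1 N).filter (fun k => S k ≤ (N : ℤ)) ⊆
        Finset.Icc 1 (K0 + ⌊ε * N / 4⌋₊) := by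
      intro k hk
      simp only [Finset.mem_filter, Finset.mem_Icc] at hk ⊢
      obtain ⟨⟨hk1, hkN⟩, hkS⟩ := hk
      refine ⟨hk1, ?_⟩
      by_cases hkK : k ≤ K0
      · omega
      · have h1 := hSK k (le_of_not_ge hkK)
        have h2 : (4 / ε) * k ≤ (N : ℝ) := le_trans h1 (by exact_mod_cast hkS)
        have h2' := mul_le_mul_of_nonneg_right h2 hε.le
        have h4 : 4 * (k:ℝ) ≤ N * ε := by
          have hne : ε ≠ 0 := ne_of_gt hε
          calc 4 * (k:ℝ) = (4 / ε) * k * ε := by field_simp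
            _ ≤ N * ε := h2'
        have h3 : (k : ℝ) ≤ ε * N / 4 := by linarith
        have := Nat.le_floor h3
        omega
    have hcN : c N ≤ K0 + ⌊ε * N / 4⌋₊ :=
      le_trans (hcA N) (le_trans (Finset.card_le_card hsub) (by simp [Nat.card_Icc]))
    have hfloor : (⌊ε * N / 4⌋₊ : ℝ) ≤ ε * N / 4 := Nat.floor_le (by positivity)
    have hcNR : (c N : ℝ) ≤ (K0:ℝ) + ε * N / 4 := by
      have h := hcN
      have : (c N : ℝ) ≤ ((K0 + ⌊ε * N / 4⌋₊ : ℕ) : ℝ) := by exact_mod_cast h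
      push_cast at this
      linarith
    have h5 : 4 * (K0:ℝ) < N * ε := by
      have h6 : (4 * K0 / ε) < (N:ℝ) := lt_of_lt_of_le hN0 hNN0
      rw [div_lt_iff₀ hε] at h6
      linarith
    rw [Real.dist_eq, sub_zero, abs_of_nonneg (by positivity), div_lt_iff₀ hNpos]
    have hpos : (0:ℝ) < ε * N := by positivity
    nlinarith
  have heq : ∀ᶠ N in Filter.atTop,
      (((Finset.Icc 1 N).filter (fun j => W j = 1)).card : ℝ) / N = 1 - (c N : ℝ) / N := by
    filter_upwards [Filter.eventually_ge_atTop 1] with N hN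
    have hNpos : (0:ℝ) < N := by exact_mod_cast hN
    have hcard : ((Finset.Icc 1 N).filter (fun j => W j = 1)).card + c N = N := by
      simp only [hcdef]
      rw [Finset.card_filter_add_card_filter_not]
      simp [Nat.card_Icc]
    rw [eq_sub_iff_add_eq, ← add_div, div_eq_one_iff_eq (ne_of_gt hNpos)]
    exact_mod_cast hcard
  have hlim : Filter.Tendsto (fun N : ℕ => 1 - (c N : ℝ) / N) Filter.atTop (nhds 1) := by
    have h := (tendsto_const_nhds (x := (1:ℝ)) (f := Filter.atTop (α := ℕ))).sub hzero
    simpa using h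
  exact Filter.Tendsto.congr' (Filter.EventuallyEq.symm heq) hlim
end

section
/- Let (n_i)_{i≥1} be a sequence of integers with n_i ≥ 2 for all i, and let W = (W_1, W_2, W_3, …) be its J-word. If the averages (n_1 + ⋯ + n_k)/k tend to infinity as k → ∞, then the partial quotient averages of the J-word tend to 1; that is, lim_{N→∞} (W_1 + W_2 + ⋯ + W_N)/N = 1. -/
/-- If the partial quotient averages `(n_1 + ⋯ + n_k)/k` tend to infinity, then the
partial quotient averages of the J-word of `(n_i)` tend to `1`. -/
theorem jword_averages_tendsto_one (n : ℕ → ℤ) (hn : ∀ i : ℕ, 1 ≤ i → 2 ≤ n i)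
    (W : ℕ → ℕ) (hW : IsJWord n W)
    (havg : Filter.Tendsto (fun k : ℕ => (∑ i ∈ Finset.Icc 1 k, (n i : ℝ)) / k)
      Filter.atTop Filter.atTop) :
    Filter.Tendsto
      (fun N : ℕ => (∑ j ∈ Finset.Icc 1 N, (W j : ℝ)) / N)
      Filter.atTop (nhds 1) := by
    classical
  set S : ℕ → ℤ := fun k => ∑ i ∈ Finset.Icc 1 k, n i with hS
  set p : ℕ → ℤ := fun k => S k - ((k : ℤ) - 1) with hp
  -- S k ≥ 2k for k ≥ 1
  have hSk : ∀ k : ℕ, 1 ≤ k → 2 * (k : ℤ) ≤ S k := by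
    intro k hk
    have : ∑ i ∈ Finset.Icc 1 k, (2 : ℤ) ≤ S k :=
      Finset.sum_le_sum fun i hi => hn i (Finset.mem_Icc.mp hi).1
    simpa [Nat.card_Icc, mul_comm] using this
  have hpk : ∀ k : ℕ, 1 ≤ k → (k : ℤ) + 1 ≤ p k := by
    intro k hk
    have := hSk k hk
    simp only [hp]
    linarith
  -- the counting set
  set A : ℕ → Finset ℕ := fun N => (Finset.Icc 1 N).filter (fun k => p k ≤ (N : ℤ)) with hA
  -- sum upper bound
  have hsum_le : ∀ N : ℕ, (∑ j ∈ Finset.Icc 1 N, (W j : ℝ)) ≤ N + (A N).card := by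
    intro N
    set T : Finset ℕ := (Finset.Icc 1 N).filter
      (fun j => ∃ k : ℕ, 1 ≤ k ∧ (j : ℤ) = p k) with hT
    have hTA : T.card ≤ (A N).card := by
      have hsub : T ⊆ (A N).image (fun k => (p k).toNat) := by
        intro j hj
        rw [hT, Finset.mem_filter] at hj
        obtain ⟨hj1, k, hk1, hkeq⟩ := hj
        have hjN := Finset.mem_Icc.mp hj1
        have hkN : k ≤ N := by
          have h1 := hpk k hk1
          have h2 : (j : ℤ) ≤ (N : ℤ) := by exact_mod_cast hjN.2
          omega
        refine Finset.mem_image.mpr ⟨k, ?_, ?_⟩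
        · rw [hA, Finset.mem_filter, Finset.mem_Icc]
          refine ⟨⟨hk1, hkN⟩, ?_⟩
          rw [← hkeq]; exact_mod_cast hjN.2
        · omega
      exact le_trans (Finset.card_le_card hsub) (Finset.card_image_le)
    have hsplit : (∑ j ∈ Finset.Icc 1 N, (W j : ℝ))
        = ∑ j ∈ T, (W j : ℝ) + ∑ j ∈ (Finset.Icc 1 N).filter
          (fun j : ℕ => ¬ ∃ k : ℕ, 1 ≤ k ∧ (j : ℤ) = p k), (W j : ℝ) := by
      rw [hT]
      exact (Finset.sum_filter_add_sum_filter_not _ _ _).symm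
    have h2 : ∑ j ∈ T, (W j : ℝ) = 2 * T.card := by
      rw [Finset.sum_congr rfl (fun j hj => ?_), Finset.sum_const, nsmul_eq_mul, mul_comm]
      rw [hT, Finset.mem_filter, Finset.mem_Icc] at hj
      have := (hW j hj.1.1).1 hj.2
      exact_mod_cast congrArg (Nat.cast : ℕ → ℝ) this
    have h1 : ∑ j ∈ (Finset.Icc 1 N).filter
        (fun j : ℕ => ¬ ∃ k : ℕ, 1 ≤ k ∧ (j : ℤ) = p k), (W j : ℝ)
        = ((Finset.Icc 1 N).filter (fun j : ℕ => ¬ ∃ k : ℕ, 1 ≤ k ∧ (j : ℤ) = p k)).card := by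
      rw [Finset.sum_congr rfl (fun j hj => ?_), Finset.sum_const, nsmul_eq_mul, mul_one]
      rw [Finset.mem_filter, Finset.mem_Icc] at hj
      have := (hW j hj.1.1).2 hj.2
      exact_mod_cast congrArg (Nat.cast : ℕ → ℝ) this
    have hcards : T.card + ((Finset.Icc 1 N).filter
        (fun j : ℕ => ¬ ∃ k : ℕ, 1 ≤ k ∧ (j : ℤ) = p k)).card = N := by
      rw [hT, Finset.card_filter_add_card_filter_not, Nat.card_Icc]
      omega
    rw [hsplit, h2, h1]
    have : (T.card : ℝ) + ((Finset.Icc 1 N).filter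
        (fun j : ℕ => ¬ ∃ k : ℕ, 1 ≤ k ∧ (j : ℤ) = p k)).card = N := by exact_mod_cast hcards
    have hTA' : (T.card : ℝ) ≤ (A N).card := by exact_mod_cast hTA
    linarith
  -- sum lower bound
  have hsum_ge : ∀ N : ℕ, (N : ℝ) ≤ ∑ j ∈ Finset.Icc 1 N, (W j : ℝ) := by
    intro N
    have : ∑ j ∈ Finset.Icc 1 N, (1 : ℝ) ≤ ∑ j ∈ Finset.Icc 1 N, (W j : ℝ) := by
      refine Finset.sum_le_sum fun j hj => ?_
      have hj1 := (Finset.mem_Icc.mp hj).1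
      by_cases h : ∃ k : ℕ, 1 ≤ k ∧ (j : ℤ) = p k
      · have := (hW j hj1).1 h; rw [this]; norm_num
      · have := (hW j hj1).2 h; rw [this]; norm_num
    simpa [Nat.card_Icc] using this
  -- card A N / N → 0
  have hA0 : Filter.Tendsto (fun N : ℕ => ((A N).card : ℝ) / N) Filter.atTop (nhds 0) := by
    rw [NormedAddCommGroup.tendsto_nhds_zero]
    intro ε hε
    obtain ⟨K, hK⟩ := Filter.eventually_atTop.mp
      (Filter.tendsto_atTop.mp havg (1 + 2 / ε))
    set K' : ℕ := max K 1 with hK'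
    have hcard : ∀ N : ℕ, ((A N).card : ℝ) ≤ K' + ε * N / 2 := by
      intro N
      have hbound : ∀ k ∈ A N, K' ≤ k → (k : ℝ) ≤ ε * N / 2 := by
        intro k hk hKk
        rw [hA, Finset.mem_filter, Finset.mem_Icc] at hk
        have hk1 : 1 ≤ k := hk.1.1
        have hk0 : (0 : ℝ) < k := by exact_mod_cast hk1
        have hKle : K ≤ k := le_trans (le_max_left _ _) hKk
        have h1 := hK k hKle
        have hScast : (∑ i ∈ Finset.Icc 1 k, ((n i : ℝ))) = ((S k : ℤ) : ℝ) := by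
          rw [hS]; push_cast; ring
        rw [hScast, le_div_iff₀ hk0] at h1
        have h2 : (S k : ℝ) ≤ (N : ℝ) + (k : ℝ) - 1 := by
          have hpk2 : S k - ((k : ℤ) - 1) ≤ (N : ℤ) := hk.2
          have : (S k : ℤ) ≤ (N : ℤ) + (k : ℤ) - 1 := by omega
          exact_mod_cast this
        have h3 : (2 / ε) * k ≤ (N : ℝ) := by nlinarith
        rw [div_mul_eq_mul_div, div_le_iff₀ hε] at h3
        nlinarith
      have hsub : A N ⊆ Finset.Icc 1 (K' + ⌊ε * N / 2⌋₊) := by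
        intro k hk
        have hk1 : 1 ≤ k := by
          have := hk; rw [hA, Finset.mem_filter, Finset.mem_Icc] at this
          exact this.1.1
        rw [Finset.mem_Icc]
        refine ⟨hk1, ?_⟩
        by_cases h : K' ≤ k
        · have := Nat.le_floor (hbound k hk h)
          omega
        · omega
      have h4 : (A N).card ≤ K' + ⌊ε * N / 2⌋₊ := by
        have := Finset.card_le_card hsub
        rwa [Nat.card_Icc, Nat.add_sub_cancel] at this
      have h5 : (⌊ε * N / 2⌋₊ : ℝ) ≤ ε * N / 2 :=
        Nat.floor_le (by positivity)
      have h6 : ((A N).card : ℝ) ≤ (K' : ℝ) + (⌊ε * N / 2⌋₊ : ℝ) := by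
        exact_mod_cast h4
      linarith
    refine Filter.eventually_atTop.mpr ⟨⌈2 * K' / ε⌉₊ + 1, fun N hN => ?_⟩
    have hN1 : 1 ≤ N := le_trans (Nat.le_add_left 1 _) hN
    have hN0 : (0 : ℝ) < N := by exact_mod_cast hN1
    have hNgt : 2 * (K' : ℝ) / ε < N := by
      have h7 : (⌈2 * (K' : ℝ) / ε⌉₊ : ℝ) < N := by
        have : (⌈2 * (K' : ℝ) / ε⌉₊ + 1 : ℕ) ≤ N := hN
        have := (Nat.cast_le (α := ℝ)).mpr this
        push_cast at this
        linarith
      exact lt_of_le_of_lt (Nat.le_ceil _) h7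
    have hKN : (K' : ℝ) < ε * N / 2 := by
      rw [div_lt_iff₀ hε] at hNgt
      nlinarith
    have hnn : (0 : ℝ) ≤ ((A N).card : ℝ) / N := by positivity
    rw [Real.norm_eq_abs, abs_of_nonneg hnn, div_lt_iff₀ hN0]
    have := hcard N
    nlinarith
  -- assemble
  have hupper : Filter.Tendsto (fun N : ℕ => 1 + ((A N).card : ℝ) / N)
      Filter.atTop (nhds 1) := by
    simpa using (tendsto_const_nhds (x := (1:ℝ)) (f := Filter.atTop (α := ℕ))).add hA0
  refine tendsto_of_tendsto_of_tendsto_of_le_of_le'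
    (tendsto_const_nhds) hupper ?_ ?_
  · refine Filter.eventually_atTop.mpr ⟨1, fun N hN => ?_⟩
    have hN0 : (0 : ℝ) < N := by exact_mod_cast hN
    rw [le_div_iff₀ hN0, one_mul]
    exact hsum_ge N
  · refine Filter.eventually_atTop.mpr ⟨1, fun N hN => ?_⟩
    have hN0 : (0 : ℝ) < N := by exact_mod_cast hN
    rw [div_le_iff₀ hN0]
    have := hsum_le N
    have h8 : (1 + ((A N).card : ℝ) / N) * N = N + (A N).card := by
      field_simp
    linarith [h8 ▸ this]
end

section
/- Let (n_i)_{i≥1} be a sequence of integers with n_i ≥ 2 for all i, and let W = (W_1, W_2, W_3, …) be its J-word. If the averages (n_1 + ⋯ + n_k)/k tend to infinity as k → ∞, then for every integer d ≥ 2 the density of d among the terms of W is zero; that is, lim_{N→∞} #{ j ≤ N : W_j = d } / N = 0. -/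
/-- If the partial quotient averages `(n_1 + ⋯ + n_k)/k` tend to infinity, then for
every integer `d ≥ 2` the density of `d` among the terms of the J-word is zero. -/
theorem jword_density_of_d_eq_zero (n : ℕ → ℤ) (hn : ∀ i : ℕ, 1 ≤ i → 2 ≤ n i)
    (W : ℕ → ℕ) (hW : IsJWord n W)
    (havg : Filter.Tendsto (fun k : ℕ => (∑ i ∈ Finset.Icc 1 k, (n i : ℝ)) / k)
      Filter.atTop Filter.atTop)
    (d : ℕ) (hd : 2 ≤ d) :
    Filter.Tendsto
      (fun N : ℕ => (((Finset.Icc 1 N).filter (fun j => W j = d)).card : ℝ) / N)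
      Filter.atTop (nhds 0) := by
  by_cases hd2 : d = 2
  case neg =>
    -- `W` only takes values 1 and 2, so the count is always zero.
    have hzero : ∀ N, ((Finset.Icc 1 N).filter (fun j => W j = d)).card = 0 := by
      intro N
      rw [Finset.card_eq_zero, Finset.filter_eq_empty_iff]
      intro j hj
      have hj1 : 1 ≤ j := (Finset.mem_Icc.mp hj).1
      obtain ⟨h2, h1⟩ := hW j hj1
      by_cases hex : ∃ k : ℕ, 1 ≤ k ∧
          (j : ℤ) = (∑ i ∈ Finset.Icc 1 k, n i) - ((k : ℤ) - 1)
      · rw [h2 hex]; omega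
      · rw [h1 hex]; omega
    have : (fun N : ℕ =>
        (((Finset.Icc 1 N).filter (fun j => W j = d)).card : ℝ) / N) = fun _ => 0 := by
      funext N; rw [hzero N]; simp
    rw [this]
    exact tendsto_const_nhds
  case pos =>
  subst hd2
  set p : ℕ → ℤ := fun k => (∑ i ∈ Finset.Icc 1 k, n i) - ((k : ℤ) - 1) with hp
  -- basic facts about `p`
  have hstep : ∀ k : ℕ, p (k + 1) = p k + n (k + 1) - 1 := by
    intro k
    simp only [hp]
    rw [Finset.sum_Icc_succ_top (by omega : 1 ≤ k + 1)]
    push_cast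
    ring
  have hlb : ∀ k : ℕ, (k : ℤ) + 1 ≤ p k := by
    intro k
    induction k with
    | zero => simp [hp]
    | succ k ih =>
      have := hn (k + 1) (by omega)
      rw [hstep k]
      push_cast
      omega
  have hmono : StrictMono p := by
    apply strictMono_nat_of_lt_succ
    intro k
    have := hn (k + 1) (by omega)
    rw [hstep k]
    omega
  -- the count of 2's up to N is at most the number of k ≥ 1 with p k ≤ N
  have hcount : ∀ N : ℕ,
      ((Finset.Icc 1 N).filter (fun j => W j = 2)).card ≤
      ((Finset.Icc 1 N).filter (fun k => p k ≤ (N : ℤ))).card := by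
    intro N
    have key : ∀ j ∈ (Finset.Icc 1 N).filter (fun j => W j = 2),
        ∃ k : ℕ, 1 ≤ k ∧ (j : ℤ) = p k := by
      intro j hj
      rw [Finset.mem_filter, Finset.mem_Icc] at hj
      obtain ⟨⟨hj1, hjN⟩, hj2⟩ := hj
      obtain ⟨h2, h1⟩ := hW j hj1
      by_contra hex
      rw [h1 hex] at hj2
      omega
    classical
    refine Finset.card_le_card_of_injOn
      (fun j => if h : ∃ k : ℕ, 1 ≤ k ∧ (j : ℤ) = p k then h.choose else 0) ?_ ?_
    · intro j hj
      have hex := key j hj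
      rw [Finset.mem_coe, Finset.mem_filter, Finset.mem_Icc] at hj
      obtain ⟨⟨hj1, hjN⟩, _⟩ := hj
      simp only [dif_pos hex]
      obtain ⟨hk1, hkj⟩ := hex.choose_spec
      rw [Finset.mem_coe, Finset.mem_filter, Finset.mem_Icc]
      have hpk : p hex.choose ≤ (N : ℤ) := by rw [← hkj]; exact_mod_cast hjN
      have hlbk := hlb hex.choose
      refine ⟨⟨hk1, ?_⟩, hpk⟩
      have h := le_trans hlbk hpk
      omega
    · intro j1 hj1 j2 hj2 heq
      have hex1 := key j1 hj1
      have hex2 := key j2 hj2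
      simp only [dif_pos hex1, dif_pos hex2] at heq
      obtain ⟨_, hk1⟩ := hex1.choose_spec
      obtain ⟨_, hk2⟩ := hex2.choose_spec
      have : (j1 : ℤ) = (j2 : ℤ) := by rw [hk1, hk2, heq]
      exact_mod_cast this
  -- p k / k → ∞
  have hpdiv : Filter.Tendsto (fun k : ℕ => (p k : ℝ) / k) Filter.atTop Filter.atTop := by
    have hsum : Filter.Tendsto (fun k : ℕ => (∑ i ∈ Finset.Icc 1 k, (n i : ℝ)) / k - 1)
        Filter.atTop Filter.atTop := Filter.tendsto_atTop_add_const_right _ (-1) havg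
    apply Filter.tendsto_atTop_mono' _ _ hsum
    filter_upwards [Filter.eventually_ge_atTop 1] with k hk
    have hk0 : (0 : ℝ) < (k : ℝ) := by exact_mod_cast hk
    have hcast : ((p k : ℤ) : ℝ) = (∑ i ∈ Finset.Icc 1 k, (n i : ℝ)) - ((k : ℝ) - 1) := by
      simp only [hp]; push_cast; ring
    rw [hcast, sub_div]
    have h1 : ((k : ℝ) - 1) / k ≤ 1 := by
      rw [div_le_one hk0]; linarith
    linarith
  -- conclude
  rw [Metric.tendsto_atTop]
  intro ε hε
  -- choose K₀ with k < ε * p k for k ≥ K₀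
  obtain ⟨K₀, hK₀⟩ := Filter.eventually_atTop.mp (hpdiv.eventually_ge_atTop (1 / ε + 1))
  obtain ⟨N₀, hN₀⟩ := exists_nat_gt ((K₀ : ℝ) / ε)
  use max N₀ 1
  intro N hN
  have hN1 : 1 ≤ N := le_trans (le_max_right _ _) hN
  have hNr : (0 : ℝ) < (N : ℝ) := by exact_mod_cast hN1
  set f : ℝ := (((Finset.Icc 1 N).filter (fun j => W j = 2)).card : ℝ) / N with hf
  have hfnn : 0 ≤ f := by positivity
  rw [Real.dist_eq, sub_zero, abs_of_nonneg hfnn]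
  -- bound the count
  set Kset := (Finset.Icc 1 N).filter (fun k => p k ≤ (N : ℤ)) with hKset
  rcases Finset.eq_empty_or_nonempty Kset with hKe | hKne
  · have : ((Finset.Icc 1 N).filter (fun j => W j = 2)).card = 0 := by
      have := hcount N
      rw [← hKset, hKe] at this
      simpa using this
    rw [hf, this]
    simpa using hε
  · set m := Kset.max' hKne with hm
    have hmmem : m ∈ Kset := Kset.max'_mem hKne
    rw [hKset, Finset.mem_filter, Finset.mem_Icc] at hmmem
    obtain ⟨⟨hm1, hmN⟩, hpmN⟩ := hmmem
    have hcard_le : (((Finset.Icc 1 N).filter (fun j => W j = 2)).card : ℝ) ≤ (m : ℝ) := by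
      have h1 : Kset.card ≤ m := by
        have hsub : Kset ⊆ Finset.Icc 1 m := by
          intro k hk
          have hkle := Kset.le_max' k hk
          rw [hKset, Finset.mem_filter, Finset.mem_Icc] at hk
          rw [Finset.mem_Icc]
          exact ⟨hk.1.1, hkle⟩
        calc Kset.card ≤ (Finset.Icc 1 m).card := Finset.card_le_card hsub
          _ = m := by rw [Nat.card_Icc]; omega
      have := hcount N
      exact_mod_cast le_trans this h1
    rcases le_or_gt K₀ m with hmK | hmK
    · -- m ≥ K₀ : m < ε * p m ≤ ε * N
      have hpm := hK₀ m hmK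
      have hpm0 : (0 : ℝ) < (p m : ℝ) := by
        have := hlb m
        have : (1 : ℤ) ≤ p m := by omega
        exact_mod_cast lt_of_lt_of_le zero_lt_one (by exact_mod_cast this)
      have hm0 : (0 : ℝ) < (m : ℝ) := by exact_mod_cast hm1
      have h2 : (m : ℝ) < ε * (p m : ℝ) := by
        have hεinv : 1 / ε < (p m : ℝ) / m := lt_of_lt_of_le (by linarith) hpm
        rw [div_lt_div_iff₀ (by positivity) hm0] at hεinv
        calc (m : ℝ) = (1 * m) := (one_mul _).symm
          _ < ε * (p m : ℝ) := by nlinarith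
      have h3 : (p m : ℝ) ≤ (N : ℝ) := by exact_mod_cast hpmN
      have : f ≤ (m : ℝ) / N := by
        rw [hf]; gcongr
      calc f ≤ (m : ℝ) / N := this
        _ < ε := by
          rw [div_lt_iff₀ hNr]
          calc (m : ℝ) < ε * (p m : ℝ) := h2
            _ ≤ ε * N := by nlinarith
    · -- m < K₀ : card ≤ m < K₀ and K₀ / N < ε
      have hNK : (K₀ : ℝ) / ε < (N : ℝ) := by
        have hN₀N : N₀ ≤ N := le_trans (le_max_left _ _) hN
        exact lt_of_lt_of_le hN₀ (by exact_mod_cast hN₀N)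
      have hKN : (K₀ : ℝ) < ε * N := by
        rw [div_lt_iff₀ hε] at hNK
        linarith
      have hmK' : (m : ℝ) < (K₀ : ℝ) := by exact_mod_cast hmK
      calc f ≤ (m : ℝ) / N := by rw [hf]; gcongr
        _ < ε := by rw [div_lt_iff₀ hNr]; linarith
end

section
/- The set of irrational numbers x in the open unit interval (0,1) whose regular continued fraction partial quotients a_1(x), a_2(x), a_3(x), … satisfy lim_{k→∞} #{ 1 ≤ i ≤ k : a_i(x) = 1 } / k = 1 is a Lebesgue null set. -/
open MeasureTheory Set Filter

/-- The Gauss continued fraction map `x ↦ {1/x}`. -/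
noncomputable def gaussMap (x : ℝ) : ℝ := Int.fract (1 / x)

/-- For an irrational `x ∈ (0,1)`, `cfPartialQuotient x i` is the `i`-th partial
quotient `a_i(x)` (indexed from `1`) of the regular continued fraction expansion
`x = [0; a_1(x), a_2(x), …]`, i.e. `a_i(x) = ⌊1 / G^[i-1](x)⌋` where `G` is the
Gauss map. -/
noncomputable def cfPartialQuotient (x : ℝ) (i : ℕ) : ℤ :=
  ⌊1 / (gaussMap^[i - 1] x)⌋

lemma gaussMap_eq (x : ℝ) : gaussMap x = 1 / x - ⌊1 / x⌋ :=
  (Int.self_sub_floor (1 / x)).symm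

lemma measurable_gaussMap : Measurable gaussMap := by
  unfold gaussMap
  exact measurable_fract.comp (measurable_const.div measurable_id)

lemma irrational_gaussMap {x : ℝ} (hx : Irrational x) : Irrational (gaussMap x) := by
  have h1 : Irrational (1 / x) := by simpa [one_div] using hx.inv
  rw [gaussMap_eq]
  exact h1.sub_intCast _

lemma gaussMap_mem_Ioo {x : ℝ} (hx : Irrational x) : gaussMap x ∈ Set.Ioo (0:ℝ) 1 := by
  refine ⟨?_, Int.fract_lt_one _⟩
  rcases lt_or_eq_of_le (Int.fract_nonneg (1 / x)) with h | h
  · exact h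
  · exact absurd h.symm ((irrational_gaussMap hx).ne_zero)

lemma irrational_iterate {x : ℝ} (hx : Irrational x) (n : ℕ) :
    Irrational (gaussMap^[n] x) := by
  induction n with
  | zero => simpa using hx
  | succ n ih => rw [Function.iterate_succ_apply']; exact irrational_gaussMap ih

lemma iterate_mem_Ioo {x : ℝ} (hx : Irrational x) (hx01 : x ∈ Set.Ioo (0:ℝ) 1) (n : ℕ) :
    gaussMap^[n] x ∈ Set.Ioo (0:ℝ) 1 := by
  cases n with
  | zero => simpa using hx01
  | succ n =>
    rw [Function.iterate_succ_apply']
    exact gaussMap_mem_Ioo (irrational_iterate hx n)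

/-- The density of the (unnormalized) Gauss measure. -/
noncomputable def gdens : ℝ → ENNReal :=
  fun x => ENNReal.ofReal ((Set.Ioo (0:ℝ) 1).indicator (fun x => (1+x)⁻¹) x)

lemma measurable_gdens : Measurable gdens := by
  apply ENNReal.measurable_ofReal.comp
  exact Measurable.indicator (measurable_const.add measurable_id).inv measurableSet_Ioo

/-- The (unnormalized) Gauss measure. -/
noncomputable def gmeas : Measure ℝ := volume.withDensity gdens

lemma gmeas_null {s : Set ℝ} (hs : volume s = 0) : gmeas s = 0 :=
  withDensity_absolutelyContinuous volume gdens hs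

instance : NullSingletonClass gmeas := ⟨fun x => gmeas_null (measure_singleton x)⟩

lemma gmeas_compl_Ioo : gmeas (Set.Ioo (0:ℝ) 1)ᶜ = 0 := by
  rw [gmeas, withDensity_apply _ measurableSet_Ioo.compl]
  have h : ∀ x ∈ (Set.Ioo (0:ℝ) 1)ᶜ, gdens x = (fun _ => (0:ENNReal)) x := fun x hx => by
    simp [gdens, Set.indicator_of_notMem hx]
  rw [setLIntegral_congr_fun measurableSet_Ioo.compl h,
    lintegral_zero]

lemma gmeas_inter_Ioo (s : Set ℝ) : gmeas s = gmeas (s ∩ Set.Ioo 0 1) := by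
  have h0 : gmeas (s \ Set.Ioo 0 1) = 0 :=
    le_antisymm (le_trans (measure_mono (diff_subset_compl _ _)) gmeas_compl_Ioo.le) zero_le
  refine le_antisymm ?_ (measure_mono inter_subset_left)
  calc gmeas s ≤ gmeas (s ∩ Set.Ioo 0 1) + gmeas (s \ Set.Ioo 0 1) :=
        le_trans (measure_mono (by intro x hx; by_cases h01 : x ∈ Set.Ioo (0:ℝ) 1 <;> simp [hx, h01])) (measure_union_le _ _)
    _ = gmeas (s ∩ Set.Ioo 0 1) := by rw [h0, add_zero]

lemma gmeas_Ioo {a b : ℝ} (ha : 0 ≤ a) (hab : a ≤ b) (hb : b ≤ 1) :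
    gmeas (Set.Ioo a b) = ENNReal.ofReal (Real.log (1+b) - Real.log (1+a)) := by
  have hsub : Set.Ioo a b ⊆ Set.Ioo 0 1 := Set.Ioo_subset_Ioo ha hb
  rw [gmeas, withDensity_apply _ measurableSet_Ioo]
  have h : ∀ x ∈ Set.Ioo a b, gdens x = (fun x => ENNReal.ofReal ((1+x)⁻¹)) x := fun x hx => by
    simp [gdens, Set.indicator_of_mem (hsub hx)]
  rw [setLIntegral_congr_fun measurableSet_Ioo h]
  have hint : IntegrableOn (fun x => (1+x)⁻¹) (Set.Ioo a b) volume := by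
    apply IntegrableOn.mono_set (t := Set.Icc a b) _ Set.Ioo_subset_Icc_self
    apply ContinuousOn.integrableOn_Icc
    apply ContinuousOn.inv₀ (continuousOn_const.add continuousOn_id)
    intro x hx
    have : 0 ≤ x := le_trans ha hx.1
    show (1:ℝ) + x ≠ 0; positivity
  have hnn : 0 ≤ᶠ[ae (volume.restrict (Set.Ioo a b))] (fun x => (1+x)⁻¹) := by
    refine Filter.eventually_of_mem (self_mem_ae_restrict measurableSet_Ioo) ?_
    intro x hx
    have : 0 ≤ x := le_trans ha hx.1.le
    positivity
  rw [← ofReal_integral_eq_lintegral_ofReal hint hnn]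
  congr 1
  have : ∫ x in Set.Ioo a b, (1+x)⁻¹ = ∫ x in a..b, (1+x)⁻¹ := by
    rw [intervalIntegral.integral_of_le hab, integral_Ioc_eq_integral_Ioo]
  rw [this]
  have h2 : ∫ x in a..b, (1+x)⁻¹ = ∫ x in (a+1)..(b+1), x⁻¹ := by
    rw [← intervalIntegral.integral_comp_add_right (fun x => x⁻¹) 1]
    congr 1; ext x; rw [add_comm]
  rw [h2, integral_inv (by
    rw [Set.uIcc_of_le (by linarith : a + 1 ≤ b + 1)]
    intro h
    have := h.1
    linarith)]
  rw [Real.log_div (by linarith) (by positivity)]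
  ring_nf

instance : IsFiniteMeasure gmeas := by
  constructor
  rw [gmeas_inter_Ioo, Set.univ_inter]
  calc gmeas (Set.Ioo (0:ℝ) 1) ≤ volume (Set.Ioo (0:ℝ) 1) := by
        rw [gmeas, withDensity_apply _ measurableSet_Ioo]
        calc ∫⁻ x in Set.Ioo (0:ℝ) 1, gdens x ≤ ∫⁻ _ in Set.Ioo (0:ℝ) 1, 1 := by
              apply lintegral_mono
              intro x
              simp only [gdens]
              refine ENNReal.ofReal_le_of_le_toReal ?_
              simp only [ENNReal.toReal_one]
              by_cases hx : x ∈ Set.Ioo (0:ℝ) 1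
              · rw [Set.indicator_of_mem hx]
                rw [inv_le_one₀ (by have := hx.1; linarith)]
                linarith [hx.1.le]
              · rw [Set.indicator_of_notMem hx]; norm_num
          _ = volume (Set.Ioo (0:ℝ) 1) := setLIntegral_one _
    _ < ⊤ := by rw [Real.volume_Ioo]; exact ENNReal.ofReal_lt_top

/-- The Gauss measure is at most Lebesgue measure. -/
lemma gmeas_le_volume {s : Set ℝ} (hs : MeasurableSet s) : gmeas s ≤ volume s := by
  rw [gmeas, withDensity_apply _ hs]
  calc ∫⁻ x in s, gdens x ≤ ∫⁻ _ in s, 1 := by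
        apply lintegral_mono
        intro x
        simp only [gdens]
        refine ENNReal.ofReal_le_of_le_toReal ?_
        simp only [ENNReal.toReal_one]
        by_cases hx : x ∈ Set.Ioo (0:ℝ) 1
        · rw [Set.indicator_of_mem hx]
          rw [inv_le_one₀ (by have := hx.1; linarith)]
          linarith [hx.1.le]
        · rw [Set.indicator_of_notMem hx]; norm_num
    _ = volume s := setLIntegral_one _

/-- Lebesgue measure on `(0,1)` is at most twice the Gauss measure. -/
lemma volume_le_two_gmeas {s : Set ℝ} (hs : MeasurableSet s) :
    volume (s ∩ Set.Ioo 0 1) ≤ 2 * gmeas s := by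
  have h1 : gmeas (s ∩ Set.Ioo 0 1) ≥ 2⁻¹ * volume (s ∩ Set.Ioo 0 1) := by
    rw [gmeas, withDensity_apply _ (hs.inter measurableSet_Ioo)]
    calc 2⁻¹ * volume (s ∩ Set.Ioo 0 1) = ∫⁻ _ in s ∩ Set.Ioo 0 1, 2⁻¹ := by
          rw [setLIntegral_const]
      _ ≤ ∫⁻ x in s ∩ Set.Ioo 0 1, gdens x := by
          apply setLIntegral_mono measurable_gdens
          intro x hx
          have hx2 : x ∈ Set.Ioo (0:ℝ) 1 := hx.2
          simp only [gdens, Set.indicator_of_mem hx2]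
          rw [show ((2:ENNReal)⁻¹ = ENNReal.ofReal (2⁻¹ : ℝ)) by
            rw [ENNReal.ofReal_inv_of_pos (by norm_num), ENNReal.ofReal_ofNat]]
          apply ENNReal.ofReal_le_ofReal
          exact inv_anti₀ (by have := hx2.1; linarith) (by linarith [hx2.2.le])
  calc volume (s ∩ Set.Ioo 0 1) = 2 * (2⁻¹ * volume (s ∩ Set.Ioo 0 1)) := by
        rw [← mul_assoc, ENNReal.mul_inv_cancel (by norm_num) (by norm_num), one_mul]
    _ ≤ 2 * gmeas (s ∩ Set.Ioo 0 1) := by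
        exact mul_le_mul_right h1 2
    _ ≤ 2 * gmeas s := mul_le_mul_right (measure_mono inter_subset_left) 2

lemma gauss_preimage_inter {a b : ℝ} (ha : 0 ≤ a) (hab : a < b) (hb : b ≤ 1) :
    gaussMap ⁻¹' (Set.Ioo a b) ∩ Set.Ioo 0 1 =
      ⋃ n : ℕ, Set.Ioo (((n:ℝ)+1+b)⁻¹) (((n:ℝ)+1+a)⁻¹) := by
  ext x
  simp only [Set.mem_inter_iff, Set.mem_preimage, Set.mem_Ioo, Set.mem_iUnion]
  constructor
  · rintro ⟨⟨hga, hgb⟩, hx0, hx1⟩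
    have hy1 : 1 < 1 / x := by rw [lt_div_iff₀ hx0]; linarith
    set N := ⌊1 / x⌋ with hN
    have hN1 : 1 ≤ N := by
      have : (1:ℝ) ≤ 1 / x := hy1.le
      exact_mod_cast Int.le_floor.mpr (by exact_mod_cast this)
    have hNr : (1:ℝ) ≤ (N:ℝ) := by exact_mod_cast hN1
    rw [gaussMap_eq] at hga hgb
    have h1 : (N:ℝ) + a < 1 / x := by linarith
    have h2 : 1 / x < (N:ℝ) + b := by linarith
    have hint : ((N-1).toNat : ℤ) = N - 1 := Int.toNat_of_nonneg (by omega)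
    have hcast : ((N - 1).toNat : ℝ) + 1 = (N:ℝ) := by
      have h' : ((N-1).toNat : ℝ) = (N:ℝ) - 1 := by exact_mod_cast hint
      rw [h']; ring
    have hinvpos : (0:ℝ) < 1 / x := by positivity
    refine ⟨(N - 1).toNat, ?_, ?_⟩
    · rw [hcast]
      rw [show x = (1 / x)⁻¹ by field_simp]
      exact (inv_lt_inv₀ (by linarith) hinvpos).mpr h2
    · rw [hcast]
      rw [show x = (1 / x)⁻¹ by field_simp]
      exact (inv_lt_inv₀ hinvpos (by linarith)).mpr h1
  · rintro ⟨n, hx1, hx2⟩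
    set c : ℝ := (n:ℝ) + 1 + a with hc
    set d : ℝ := (n:ℝ) + 1 + b with hd
    have hnn : (0:ℝ) ≤ (n:ℝ) := Nat.cast_nonneg n
    have hc1 : (1:ℝ) ≤ c := by rw [hc]; linarith
    have hcpos : (0:ℝ) < c := by linarith
    have hdpos : (0:ℝ) < d := by rw [hd]; linarith
    have hx0 : 0 < x := lt_trans (inv_pos.mpr hdpos) hx1
    have hxlt1 : x < 1 := lt_of_lt_of_le hx2 (by
      rw [inv_le_one₀ hcpos]; exact hc1)
    have hinv1 : c < 1 / x := by
      rw [lt_div_iff₀ hx0]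
      calc c * x < c * c⁻¹ := by exact mul_lt_mul_of_pos_left hx2 hcpos
        _ = 1 := mul_inv_cancel₀ (ne_of_gt hcpos)
    have hinv2 : 1 / x < d := by
      rw [div_lt_iff₀ hx0]
      calc (1:ℝ) = d * d⁻¹ := (mul_inv_cancel₀ (ne_of_gt hdpos)).symm
        _ < d * x := by exact mul_lt_mul_of_pos_left hx1 hdpos
    have hfloor : ⌊1 / x⌋ = (n:ℤ) + 1 := by
      rw [Int.floor_eq_iff]
      constructor
      · push_cast; linarith [ha, hinv1]
      · push_cast; linarith [hb, hinv2]
    refine ⟨⟨?_, ?_⟩, hx0, hxlt1⟩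
    · rw [gaussMap_eq, hfloor]; push_cast; linarith
    · rw [gaussMap_eq, hfloor]; push_cast; linarith

lemma gmeas_preimage_Ioo {a b : ℝ} (ha : 0 ≤ a) (hab : a < b) (hb : b ≤ 1) :
    gmeas (gaussMap ⁻¹' Set.Ioo a b) = gmeas (Set.Ioo a b) := by
  have hlog : ∀ t : ℝ, 0 < t → Real.log (1 + t⁻¹) = Real.log (t+1) - Real.log t := by
    intro t ht
    rw [show (1:ℝ) + t⁻¹ = (t+1)/t by field_simp, Real.log_div (by linarith) (ne_of_gt ht)]
  set ψ : ℕ → ℝ := fun n => Real.log ((n:ℝ)+1+b) - Real.log ((n:ℝ)+1+a) with hψ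
  have hcpos : ∀ n : ℕ, (0:ℝ) < (n:ℝ)+1+a := fun n => by
    have : (0:ℝ) ≤ (n:ℝ) := Nat.cast_nonneg n; linarith
  have hdpos : ∀ n : ℕ, (0:ℝ) < (n:ℝ)+1+b := fun n => by
    have : (0:ℝ) ≤ (n:ℝ) := Nat.cast_nonneg n; linarith
  have hterm : ∀ n : ℕ,
      gmeas (Set.Ioo (((n:ℝ)+1+b)⁻¹) (((n:ℝ)+1+a)⁻¹)) = ENNReal.ofReal (ψ n - ψ (n+1)) := by
    intro n
    rw [gmeas_Ioo (inv_nonneg.mpr (hdpos n).le)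
      (by apply inv_anti₀ (hcpos n); linarith)
      (by rw [inv_le_one₀ (hcpos n)]; linarith)]
    congr 1
    rw [hlog _ (hcpos n), hlog _ (hdpos n)]
    simp only [hψ]
    push_cast
    ring
  have hnonneg : ∀ n : ℕ, 0 ≤ ψ n - ψ (n+1) := by
    intro n
    have h := hterm n
    have h1 : Real.log (1 + (((n:ℝ)+1+b))⁻¹) ≤ Real.log (1 + (((n:ℝ)+1+a))⁻¹) := by
      apply Real.log_le_log (by have := inv_nonneg.mpr (hdpos n).le; linarith)
      have : ((n:ℝ)+1+b)⁻¹ ≤ ((n:ℝ)+1+a)⁻¹ := by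
        apply inv_anti₀ (hcpos n); linarith
      linarith
    rw [hlog _ (hcpos n), hlog _ (hdpos n)] at h1
    simp only [hψ]
    push_cast
    ring_nf
    ring_nf at h1
    linarith
  have hψ0 : Tendsto ψ atTop (nhds 0) := by
    have hden : Tendsto (fun N : ℕ => (N:ℝ)+1+a) atTop atTop := by
      have := Filter.tendsto_atTop_add_const_right atTop (1+a)
        (tendsto_natCast_atTop_atTop (R := ℝ))
      convert this using 2 with N
      ring
    have hr : Tendsto (fun N : ℕ => (b-a)/((N:ℝ)+1+a)) atTop (nhds 0) :=
      Tendsto.div_atTop tendsto_const_nhds hden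
    have hratio : Tendsto (fun N : ℕ => 1 + (b-a)/((N:ℝ)+1+a)) atTop (nhds 1) := by
      have := tendsto_const_nhds (x := (1:ℝ)) (f := atTop (α := ℕ)) |>.add hr
      simpa using this
    have hcomp := (Real.continuousAt_log (by norm_num : (1:ℝ) ≠ 0)).tendsto.comp hratio
    simp only [Real.log_one] at hcomp
    apply hcomp.congr
    intro N
    simp only [Function.comp_apply, hψ]
    rw [show (1:ℝ) + (b-a)/((N:ℝ)+1+a) = ((N:ℝ)+1+b)/((N:ℝ)+1+a) by
      field_simp; ring]
    rw [Real.log_div (ne_of_gt (hdpos N)) (ne_of_gt (hcpos N))]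
  have htsum : (∑' n : ℕ, ENNReal.ofReal (ψ n - ψ (n+1))) = ENNReal.ofReal (ψ 0) := by
    have hpartial : ∀ N : ℕ, (∑ i ∈ Finset.range N, ENNReal.ofReal (ψ i - ψ (i+1)))
        = ENNReal.ofReal (ψ 0 - ψ N) := by
      intro N
      rw [← ENNReal.ofReal_sum_of_nonneg (fun i _ => hnonneg i), Finset.sum_range_sub' ψ N]
    have h1 : Tendsto (fun N : ℕ => ∑ i ∈ Finset.range N, ENNReal.ofReal (ψ i - ψ (i+1)))
        atTop (nhds (∑' n : ℕ, ENNReal.ofReal (ψ n - ψ (n+1)))) := ENNReal.tendsto_nat_tsum _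
    have h2 : Tendsto (fun N : ℕ => ∑ i ∈ Finset.range N, ENNReal.ofReal (ψ i - ψ (i+1)))
        atTop (nhds (ENNReal.ofReal (ψ 0))) := by
      simp only [hpartial]
      have h3 : Tendsto (fun N : ℕ => ψ 0 - ψ N) atTop (nhds (ψ 0 - 0)) :=
        tendsto_const_nhds.sub hψ0
      rw [sub_zero] at h3
      exact (ENNReal.continuous_ofReal.tendsto _).comp h3
    exact tendsto_nhds_unique h1 h2
  have hdisjoint : Pairwise (Function.onFun Disjoint
      (fun n : ℕ => Set.Ioo (((n:ℝ)+1+b)⁻¹) (((n:ℝ)+1+a)⁻¹))) := by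
    have key : ∀ m n : ℕ, m < n → Disjoint (Set.Ioo (((m:ℝ)+1+b)⁻¹) (((m:ℝ)+1+a)⁻¹))
        (Set.Ioo (((n:ℝ)+1+b)⁻¹) (((n:ℝ)+1+a)⁻¹)) := by
      intro m n hmn
      apply Set.disjoint_left.mpr
      rintro x ⟨hx1, _⟩ ⟨_, hx4⟩
      have hle : ((n:ℝ)+1+a)⁻¹ ≤ ((m:ℝ)+1+b)⁻¹ := by
        have hm1 : (0:ℝ) ≤ (m:ℝ) := Nat.cast_nonneg m
        apply inv_anti₀ (by linarith)
        have : (m:ℝ) + 1 ≤ (n:ℝ) := by exact_mod_cast hmn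
        linarith
      linarith
    intro m n hmn
    rcases hmn.lt_or_gt with h | h
    · exact key m n h
    · exact (key n m h).symm
  calc gmeas (gaussMap ⁻¹' Set.Ioo a b)
      = gmeas (gaussMap ⁻¹' Set.Ioo a b ∩ Set.Ioo 0 1) := gmeas_inter_Ioo _
    _ = gmeas (⋃ n : ℕ, Set.Ioo (((n:ℝ)+1+b)⁻¹) (((n:ℝ)+1+a)⁻¹)) := by
        rw [gauss_preimage_inter ha hab hb]
    _ = ∑' n : ℕ, gmeas (Set.Ioo (((n:ℝ)+1+b)⁻¹) (((n:ℝ)+1+a)⁻¹)) :=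
        measure_iUnion hdisjoint (fun n => measurableSet_Ioo)
    _ = ∑' n : ℕ, ENNReal.ofReal (ψ n - ψ (n+1)) := by
        exact tsum_congr hterm
    _ = ENNReal.ofReal (ψ 0) := htsum
    _ = gmeas (Set.Ioo a b) := by
        rw [gmeas_Ioo ha hab.le hb]
        congr 1
        simp [hψ]

/-- Fibers of the Gauss map are countable. -/
lemma countable_gauss_fiber (c : ℝ) : Set.Countable {x : ℝ | gaussMap x = c} := by
  apply Set.Countable.mono (s₂ := insert 0 (Set.range (fun n : ℤ => ((n:ℝ) + c)⁻¹)))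
  · intro x hx
    simp only [Set.mem_setOf_eq] at hx
    by_cases hx0 : x = 0
    · exact Set.mem_insert_iff.mpr (Or.inl hx0)
    · right
      refine ⟨⌊1/x⌋, ?_⟩
      have : gaussMap x = 1/x - ⌊1/x⌋ := gaussMap_eq x
      rw [hx] at this
      have hxx : 1/x = (⌊1/x⌋ : ℝ) + c := by linarith
      show (((⌊1/x⌋:ℤ):ℝ) + c)⁻¹ = x
      rw [← hxx]
      simp
  · exact (Set.countable_range _).insert 0

lemma gmeas_countable_null {s : Set ℝ} (hs : Set.Countable s) : gmeas s = 0 :=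
  gmeas_null (Set.Countable.measure_zero hs volume)

/-- The Gauss map preserves the Gauss measure. -/
lemma gauss_measurePreserving : MeasurePreserving gaussMap gmeas gmeas := by
  refine ⟨measurable_gaussMap, ?_⟩
  have : IsFiniteMeasure (Measure.map gaussMap gmeas) :=
    Measure.isFiniteMeasure_map gmeas gaussMap
  apply MeasureTheory.Measure.ext_of_Ioc_finite _ _ ?_
  · -- agreement on Ioc intervals
    intro p q hpq
    rw [Measure.map_apply measurable_gaussMap measurableSet_Ioc]
    set a := max p 0 with hadef
    set b := min q 1 with hbdef
    -- the target sets modulo null sets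
    have hIoc : gmeas (Set.Ioc p q) = gmeas (Set.Ioo a b) := by
      rw [measure_congr (MeasureTheory.Ioo_ae_eq_Ioc (μ := gmeas) (a := p) (b := q)).symm]
      rw [gmeas_inter_Ioo (Set.Ioo p q), Set.Ioo_inter_Ioo]
    rw [hIoc]
    -- the preimage agrees with the preimage of `Ioo a b` up to a countable set
    have hcong : gmeas (gaussMap ⁻¹' Set.Ioc p q) = gmeas (gaussMap ⁻¹' Set.Ioo a b) := by
      apply measure_congr
      rw [MeasureTheory.ae_eq_set]
      constructor
      · apply le_antisymm _ zero_le
        apply le_trans (measure_mono ?_) ((gmeas_countable_null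
          ((countable_gauss_fiber 0).union (countable_gauss_fiber b))).le)
        intro x hx
        rcases hx with ⟨hx1, hx2⟩
        simp only [Set.mem_preimage, Set.mem_Ioc] at hx1
        simp only [Set.mem_preimage, Set.mem_Ioo, not_and_or, not_lt] at hx2
        have hfr0 : 0 ≤ gaussMap x := Int.fract_nonneg _
        have hfr1 : gaussMap x < 1 := Int.fract_lt_one _
        rcases hx2 with h | h
        · -- gaussMap x ≤ a = max p 0 ; but gaussMap x > p so gaussMap x ≤ 0 so = 0
          left
          show gaussMap x = 0
          have : gaussMap x ≤ 0 ∨ gaussMap x ≤ p := by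
            rcases le_max_iff.mp h with h' | h'
            · right; exact h'
            · left; exact h'
          rcases this with h' | h'
          · exact le_antisymm h' hfr0
          · exact absurd hx1.1 (not_lt.mpr h')
        · -- b ≤ gaussMap x ; but gaussMap x ≤ q and < 1, b = min q 1
          right
          show gaussMap x = b
          apply le_antisymm _ h
          exact le_min hx1.2 hfr1.le
      · have hsub : gaussMap ⁻¹' Set.Ioo a b ⊆ gaussMap ⁻¹' Set.Ioc p q := by
          intro x hx
          simp only [Set.mem_preimage, Set.mem_Ioo] at hx
          simp only [Set.mem_preimage, Set.mem_Ioc]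
          exact ⟨lt_of_le_of_lt (le_max_left p 0) hx.1,
            hx.2.le.trans (min_le_left q 1)⟩
        rw [Set.diff_eq_empty.mpr hsub]
        exact measure_empty
    rw [hcong]
    -- now both sides concern `Ioo a b` with `0 ≤ a`, `b ≤ 1`
    by_cases hab : a < b
    · exact gmeas_preimage_Ioo (le_max_right p 0) hab (min_le_right q 1)
    · rw [Set.Ioo_eq_empty hab]
      simp
  · -- total mass
    rw [Measure.map_apply measurable_gaussMap MeasurableSet.univ]
    simp

/-- Nested intervals trapping points whose first `m+1` partial quotients are all `1`. -/
noncomputable def uv : ℕ → ℝ × ℝ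
  | 0 => (1/2, 1)
  | m+1 => ((1 + (uv m).2)⁻¹, (1 + (uv m).1)⁻¹)

lemma uv_facts : ∀ m : ℕ, 1/2 ≤ (uv m).1 ∧ (uv m).1 ≤ (uv m).2 ∧ (uv m).2 ≤ 1 := by
  intro m
  induction m with
  | zero => norm_num [uv]
  | succ m ih =>
    obtain ⟨h1, h2, h3⟩ := ih
    refine ⟨?_, ?_, ?_⟩
    · show 1/2 ≤ (1 + (uv m).2)⁻¹
      rw [show (1/2 : ℝ) = 2⁻¹ by norm_num]
      exact inv_anti₀ (by linarith) (by linarith)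
    · show (1 + (uv m).2)⁻¹ ≤ (1 + (uv m).1)⁻¹
      exact inv_anti₀ (by linarith) (by linarith)
    · show (1 + (uv m).1)⁻¹ ≤ 1
      rw [inv_le_one₀ (by linarith)]
      linarith

lemma uv_diff : ∀ m : ℕ, (uv m).2 - (uv m).1 ≤ (4/9 : ℝ)^m := by
  intro m
  induction m with
  | zero => norm_num [uv]
  | succ m ih =>
    obtain ⟨h1, h2, h3⟩ := uv_facts m
    set u := (uv m).1
    set v := (uv m).2
    have hv : (uv (m+1)).2 - (uv (m+1)).1 = (1+u)⁻¹ - (1+v)⁻¹ := rfl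
    have hu0 : (0:ℝ) < 1 + u := by linarith
    have hv0 : (0:ℝ) < 1 + v := by linarith
    have heq : (1+u)⁻¹ - (1+v)⁻¹ = (v - u) / ((1+u)*(1+v)) := by
      field_simp; ring
    have hden : (9/4 : ℝ) ≤ (1+u)*(1+v) := by nlinarith
    have hle : (v - u) / ((1+u)*(1+v)) ≤ (v - u) / (9/4) := by
      apply div_le_div_of_nonneg_left (by linarith) (by norm_num) hden
    calc (uv (m+1)).2 - (uv (m+1)).1 = (v - u) / ((1+u)*(1+v)) := by rw [hv, heq]
      _ ≤ (v - u) / (9/4) := hle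
      _ = (4/9) * (v - u) := by ring
      _ ≤ (4/9) * (4/9)^m := by nlinarith
      _ = (4/9)^(m+1) := by ring

/-- If the first `m+1` partial quotients of `y` are all `1`, then `y` lies in the
`m`-th golden interval. -/
lemma block_mem : ∀ m : ℕ, ∀ y : ℝ, Irrational y → y ∈ Set.Ioo (0:ℝ) 1 →
    (∀ t, t ≤ m → ⌊1 / (gaussMap^[t] y)⌋ = (1:ℤ)) →
    y ∈ Set.Icc (uv m).1 (uv m).2 := by
  intro m
  induction m with
  | zero =>
    intro y hy hy01 h
    have h0 := h 0 le_rfl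
    simp only [Function.iterate_zero, id_eq] at h0
    rw [Int.floor_eq_iff] at h0
    have hy0 : (0:ℝ) < y := hy01.1
    obtain ⟨ha1, ha2⟩ := h0
    rw [le_div_iff₀ hy0] at ha1
    rw [div_lt_iff₀ hy0] at ha2
    push_cast at ha1 ha2
    constructor
    · show (1/2 : ℝ) ≤ y; linarith
    · show y ≤ (1:ℝ); linarith
  | succ m ih =>
    intro y hy hy01 h
    have h0 := h 0 (Nat.zero_le _)
    simp only [Function.iterate_zero, id_eq] at h0
    have hy0 : (0:ℝ) < y := hy01.1
    have hgy : gaussMap y = 1/y - 1 := by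
      rw [gaussMap_eq, h0]; norm_num
    have hGi : Irrational (gaussMap y) := irrational_gaussMap hy
    have hG01 := gaussMap_mem_Ioo hy
    have hrec := ih (gaussMap y) hGi hG01 (fun t ht => by
      rw [← Function.iterate_succ_apply]
      exact h (t+1) (Nat.succ_le_succ ht))
    have hyeq : y = (1 + gaussMap y)⁻¹ := by
      rw [hgy]
      field_simp; ring
    obtain ⟨hf1, hf2, hf3⟩ := uv_facts m
    obtain ⟨hr1, hr2⟩ := hrec
    constructor
    · show (1 + (uv m).2)⁻¹ ≤ y
      rw [hyeq]
      exact inv_anti₀ (by linarith [hG01.1]) (by linarith)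
    · show y ≤ (1 + (uv m).1)⁻¹
      rw [hyeq]
      exact inv_anti₀ (by linarith) (by linarith)

/-- Counting: if among `a_1 … a_{k+m}` few quotients differ from `1`, then many indices
`i ∈ [1,k]` start a block of `m+1` ones. -/
lemma count_lemma (p : ℕ → Prop) [DecidablePred p] (m k : ℕ) :
    k ≤ ((Finset.Icc 1 k).filter (fun i => ∀ t, t ≤ m → p (i+t))).card
      + (m+1) * ((k+m) - ((Finset.Icc 1 (k+m)).filter p).card) := by
  classical
  set Good := (Finset.Icc 1 k).filter (fun i => ∀ t, t ≤ m → p (i+t)) with hGood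
  set Bad := (Finset.Icc 1 k).filter (fun i => ¬ ∀ t, t ≤ m → p (i+t)) with hBad
  have hsplit : Good.card + Bad.card = k := by
    rw [hGood, hBad, Finset.card_filter_add_card_filter_not, Nat.card_Icc]
    omega
  have hBadle : Bad.card ≤ (m+1) * ((k+m) - ((Finset.Icc 1 (k+m)).filter p).card) := by
    have hsub : Bad ⊆ (Finset.range (m+1)).biUnion
        (fun t => (Finset.Icc 1 k).filter (fun i => ¬ p (i+t))) := by
      intro i hi
      rw [hBad, Finset.mem_filter] at hi
      obtain ⟨hik, hnot⟩ := hi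
      push_neg at hnot
      obtain ⟨t, htm, htp⟩ := hnot
      rw [Finset.mem_biUnion]
      exact ⟨t, Finset.mem_range.mpr (Nat.lt_succ_of_le htm), Finset.mem_filter.mpr ⟨hik, htp⟩⟩
    have hcard : ∀ t ∈ Finset.range (m+1),
        ((Finset.Icc 1 k).filter (fun i => ¬ p (i+t))).card
          ≤ (k+m) - ((Finset.Icc 1 (k+m)).filter p).card := by
      intro t ht
      rw [Finset.mem_range] at ht
      have h1 : ((Finset.Icc 1 k).filter (fun i => ¬ p (i+t))).card
          ≤ ((Finset.Icc 1 (k+m)).filter (fun j => ¬ p j)).card := by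
        apply Finset.card_le_card_of_injOn (fun i => i + t)
        · intro i hi
          rw [Finset.mem_coe, Finset.mem_filter] at hi ⊢
          rw [Finset.mem_Icc] at hi ⊢
          obtain ⟨⟨hi1, hi2⟩, hip⟩ := hi.imp id id
          beta_reduce
          exact ⟨⟨by omega, by omega⟩, hip⟩
        · intro i _ j _ hij
          simp only at hij
          omega
      have h2 : ((Finset.Icc 1 (k+m)).filter (fun j => ¬ p j)).card
          = (k+m) - ((Finset.Icc 1 (k+m)).filter p).card := by
        have := Finset.card_filter_add_card_filter_not
          (s := Finset.Icc 1 (k+m)) (p := p)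
        rw [Nat.card_Icc] at this
        omega
      omega
    calc Bad.card ≤ _ := Finset.card_le_card hsub
      _ ≤ ∑ t ∈ Finset.range (m+1), ((Finset.Icc 1 k).filter (fun i => ¬ p (i+t))).card :=
          Finset.card_biUnion_le
      _ ≤ ∑ _t ∈ Finset.range (m+1), ((k+m) - ((Finset.Icc 1 (k+m)).filter p).card) :=
          Finset.sum_le_sum hcard
      _ = (m+1) * ((k+m) - ((Finset.Icc 1 (k+m)).filter p).card) := by
          rw [Finset.sum_const, Finset.card_range, smul_eq_mul]
  omega

/-- The set of irrationals `x ∈ (0,1)` whose continued fraction partial quotients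
have density of `1`'s equal to `1` is a Lebesgue null set. -/
theorem volume_density_one_set_eq_zero :
    MeasureTheory.volume
      {x : ℝ | x ∈ Set.Ioo (0 : ℝ) 1 ∧ Irrational x ∧
        Filter.Tendsto
          (fun k : ℕ =>
            (((Finset.Icc 1 k).filter (fun i => cfPartialQuotient x i = 1)).card : ℝ) / k)
          Filter.atTop (nhds 1)} = 0 := by
  classical
  set E : Set ℝ := {x : ℝ | x ∈ Set.Ioo (0 : ℝ) 1 ∧ Irrational x ∧
        Filter.Tendsto
          (fun k : ℕ =>
            (((Finset.Icc 1 k).filter (fun i => cfPartialQuotient x i = 1)).card : ℝ) / k)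
          Filter.atTop (nhds 1)} with hE
  have key : ∀ m : ℕ, volume E ≤ 2 * ENNReal.ofReal ((4/9:ℝ)^m) := by
    intro m
    set I : Set ℝ := Set.Icc (uv m).1 (uv m).2 with hI
    set A : ℕ → Set ℝ := fun i => gaussMap^[i] ⁻¹' I with hA
    have hAmeas : ∀ i, MeasurableSet (A i) :=
      fun i => (measurable_gaussMap.iterate i) measurableSet_Icc
    set μ : Measure ℝ := volume.restrict (Set.Ioo 0 1) with hμ
    have hAbound : ∀ i, μ (A i) ≤ 2 * ENNReal.ofReal ((4/9:ℝ)^m) := by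
      intro i
      rw [hμ, Measure.restrict_apply (hAmeas i)]
      calc volume (A i ∩ Set.Ioo 0 1) ≤ 2 * gmeas (A i) := volume_le_two_gmeas (hAmeas i)
        _ = 2 * gmeas I := by
            rw [hA]
            rw [(gauss_measurePreserving.iterate i).measure_preimage
              measurableSet_Icc.nullMeasurableSet]
        _ ≤ 2 * volume I := mul_le_mul_right (gmeas_le_volume measurableSet_Icc) 2
        _ = 2 * ENNReal.ofReal ((uv m).2 - (uv m).1) := by rw [hI, Real.volume_Icc]
        _ ≤ 2 * ENNReal.ofReal ((4/9:ℝ)^m) :=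
            mul_le_mul_right (ENNReal.ofReal_le_ofReal (uv_diff m)) 2
    set g : ℕ → ℝ → ENNReal := fun k x =>
      (k : ENNReal)⁻¹ * ∑ i ∈ Finset.range k, (A i).indicator (fun _ => 1) x with hg
    have hsummeas : ∀ k : ℕ, Measurable (fun x =>
        ∑ i ∈ Finset.range k, (A i).indicator (fun _ => (1:ENNReal)) x) :=
      fun k => Finset.measurable_sum _ (fun i _ => measurable_const.indicator (hAmeas i))
    have hgmeas : ∀ k, Measurable (g k) := fun k => (hsummeas k).const_mul _
    have hgint : ∀ k, ∫⁻ x, g k x ∂μ ≤ 2 * ENNReal.ofReal ((4/9:ℝ)^m) := by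
      intro k
      rw [hg]
      simp only
      rw [lintegral_const_mul _ (hsummeas k),
        lintegral_finset_sum _ (fun i _ => measurable_const.indicator (hAmeas i))]
      have hind : ∀ i ∈ Finset.range k,
          ∫⁻ x, (A i).indicator (fun _ => (1:ENNReal)) x ∂μ = μ (A i) := by
        intro i _
        rw [lintegral_indicator (hAmeas i)]
        exact setLIntegral_one _
      rw [Finset.sum_congr rfl hind]
      rcases Nat.eq_zero_or_pos k with hk | hk
      · subst hk; simp
      · calc (k : ENNReal)⁻¹ * ∑ i ∈ Finset.range k, μ (A i)
            ≤ (k : ENNReal)⁻¹ * ∑ _i ∈ Finset.range k, (2 * ENNReal.ofReal ((4/9:ℝ)^m)) :=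
              mul_le_mul_right (Finset.sum_le_sum (fun i _ => hAbound i)) _
          _ = (k : ENNReal)⁻¹ * ((k:ENNReal) * (2 * ENNReal.ofReal ((4/9:ℝ)^m))) := by
              rw [Finset.sum_const, Finset.card_range, nsmul_eq_mul]
          _ = ((k : ENNReal)⁻¹ * (k:ENNReal)) * (2 * ENNReal.ofReal ((4/9:ℝ)^m)) := by
              rw [mul_assoc]
          _ = 2 * ENNReal.ofReal ((4/9:ℝ)^m) := by
              rw [ENNReal.inv_mul_cancel (by exact_mod_cast hk.ne')
                (ENNReal.natCast_ne_top k), one_mul]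
    have hpoint : ∀ x ∈ E, (1 : ENNReal) ≤ liminf (fun k => g k x) atTop := by
      intro x hx
      obtain ⟨hx01, hxirr, hxtend⟩ := hx
      set N : ℕ → ℕ := fun K =>
        ((Finset.Icc 1 K).filter (fun i => cfPartialQuotient x i = 1)).card with hN
      set D : ℕ → ℝ := fun K => (K : ℝ) - N K with hD
      have hNle : ∀ K, N K ≤ K := fun K =>
        le_trans (Finset.card_filter_le _ _) (by rw [Nat.card_Icc]; omega)
      have hDtend : Tendsto (fun K : ℕ => D K / (K:ℝ)) atTop (nhds 0) := by
        have h1 : Tendsto (fun K : ℕ => 1 - (N K : ℝ)/(K:ℝ)) atTop (nhds (1 - 1)) :=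
          tendsto_const_nhds.sub hxtend
        rw [sub_self] at h1
        apply h1.congr'
        filter_upwards [eventually_ge_atTop 1] with K hK
        have hK0 : (K:ℝ) ≠ 0 := Nat.cast_ne_zero.mpr (by omega)
        rw [hD]
        field_simp
      have hcomp : Tendsto (fun k : ℕ => D (k+m) / ((k+m : ℕ):ℝ)) atTop (nhds 0) :=
        hDtend.comp (tendsto_add_atTop_nat m)
      have hratio : Tendsto (fun k : ℕ => ((k+m:ℕ):ℝ) / (k:ℝ)) atTop (nhds 1) := by
        have h0 : Tendsto (fun k : ℕ => (m:ℝ)/(k:ℝ)) atTop (nhds 0) :=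
          Tendsto.div_atTop tendsto_const_nhds (tendsto_natCast_atTop_atTop (R := ℝ))
        have h1 : Tendsto (fun k : ℕ => 1 + (m:ℝ)/(k:ℝ)) atTop (nhds (1 + 0)) :=
          tendsto_const_nhds.add h0
        rw [add_zero] at h1
        apply h1.congr'
        filter_upwards [eventually_ge_atTop 1] with k hk
        have hk0 : (k:ℝ) ≠ 0 := Nat.cast_ne_zero.mpr (by omega)
        push_cast
        field_simp
      set L : ℕ → ℝ := fun k =>
        1 - ((m:ℝ)+1) * (D (k+m) / ((k+m:ℕ):ℝ) * (((k+m:ℕ):ℝ)/(k:ℝ))) with hL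
      have hLtend : Tendsto L atTop (nhds 1) := by
        have h2 : Tendsto (fun k : ℕ =>
            1 - ((m:ℝ)+1) * (D (k+m) / ((k+m:ℕ):ℝ) * (((k+m:ℕ):ℝ)/(k:ℝ))))
            atTop (nhds (1 - ((m:ℝ)+1) * (0 * 1))) :=
          tendsto_const_nhds.sub (tendsto_const_nhds.mul (hcomp.mul hratio))
        rw [show (1:ℝ) - ((m:ℝ)+1) * (0 * 1) = 1 by ring] at h2
        exact h2
      have hlower : ∀ᶠ k in atTop, ENNReal.ofReal (L k) ≤ g k x := by
        filter_upwards [eventually_ge_atTop 1] with k hk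
        have hkpos : (0:ℝ) < (k:ℝ) := by exact_mod_cast Nat.pos_of_ne_zero (by omega)
        have hkmpos : (0:ℝ) < ((k+m:ℕ):ℝ) := by positivity
        have hcount := count_lemma (fun i => cfPartialQuotient x i = 1) m k
        set Good := (Finset.Icc 1 k).filter
          (fun i => ∀ t, t ≤ m → cfPartialQuotient x (i+t) = 1) with hGoodDef
        have hGA : Good.card ≤ ((Finset.range k).filter (fun i => x ∈ A i)).card := by
          apply Finset.card_le_card_of_injOn (fun i => i - 1)
          · intro i hi
            rw [hGoodDef, Finset.mem_coe, Finset.mem_filter, Finset.mem_Icc] at hi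
            obtain ⟨⟨hi1, hi2⟩, hblock⟩ := hi
            rw [Finset.mem_coe, Finset.mem_filter, Finset.mem_range]
            constructor
            · beta_reduce; omega
            · rw [hA]
              show gaussMap^[i-1] x ∈ I
              rw [hI]
              apply block_mem m _ (irrational_iterate hxirr _)
                (iterate_mem_Ioo hxirr hx01 _)
              intro t ht
              have hb := hblock t ht
              rw [cfPartialQuotient] at hb
              rw [← Function.iterate_add_apply]
              have harith : t + (i-1) = i + t - 1 := by omega
              rw [harith]
              exact hb
          · intro i hi j hj hij
            have hi' : i ∈ Finset.Icc 1 k := Finset.mem_of_mem_filter i (Finset.mem_coe.mp hi)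
            have hj' : j ∈ Finset.Icc 1 k := Finset.mem_of_mem_filter j (Finset.mem_coe.mp hj)
            rw [Finset.mem_Icc] at hi' hj'
            simp only at hij
            omega
        have hsum : (∑ i ∈ Finset.range k, (A i).indicator (fun _ => (1:ENNReal)) x)
            = (((Finset.range k).filter (fun i => x ∈ A i)).card : ENNReal) := by
          simp only [Set.indicator_apply]
          rw [Finset.sum_boole]
        -- real inequality
        have hcast : ((k+m:ℕ) - N (k+m) : ℕ) = (k:ℝ) + m - N (k+m) := by
          rw [Nat.cast_sub (hNle (k+m))]
          push_cast
          ring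
        have hreal : L k ≤ (Good.card : ℝ) / (k:ℝ) := by
          rw [le_div_iff₀ hkpos]
          have hLk : L k * (k:ℝ) = (k:ℝ) - ((m:ℝ)+1) * D (k+m) := by
            rw [hL]
            field_simp
          rw [hLk]
          have hc : (k:ℝ) ≤ (Good.card : ℝ) + ((m:ℝ)+1) * D (k+m) := by
            have := hcount
            have hc2 : (k:ℝ) ≤ (Good.card : ℝ)
                + ((m:ℝ)+1) * (((k+m:ℕ) - N (k+m) : ℕ) : ℝ) := by
              exact_mod_cast this
            rw [hcast] at hc2
            rw [hD]
            push_cast at hc2 ⊢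
            linarith
          linarith
        -- transfer to ENNReal
        have h1 : ENNReal.ofReal (L k) ≤ ENNReal.ofReal ((Good.card : ℝ) / (k:ℝ)) :=
          ENNReal.ofReal_le_ofReal hreal
        have h2 : ENNReal.ofReal ((Good.card : ℝ) / (k:ℝ))
            = (k : ENNReal)⁻¹ * (Good.card : ENNReal) := by
          rw [ENNReal.ofReal_div_of_pos hkpos, ENNReal.ofReal_natCast,
            ENNReal.ofReal_natCast, div_eq_mul_inv, mul_comm]
        have h3 : (k : ENNReal)⁻¹ * (Good.card : ENNReal) ≤ g k x := by
          rw [hg]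
          simp only
          rw [hsum]
          apply mul_le_mul_right
          exact_mod_cast hGA
        calc ENNReal.ofReal (L k) ≤ ENNReal.ofReal ((Good.card : ℝ) / (k:ℝ)) := h1
          _ = (k : ENNReal)⁻¹ * (Good.card : ENNReal) := h2
          _ ≤ g k x := h3
      have hliminfL : liminf (fun k => ENNReal.ofReal (L k)) atTop = 1 := by
        rw [(ENNReal.tendsto_ofReal hLtend).liminf_eq, ENNReal.ofReal_one]
      calc (1 : ENNReal) = liminf (fun k => ENNReal.ofReal (L k)) atTop := hliminfL.symm
        _ ≤ liminf (fun k => g k x) atTop := liminf_le_liminf hlower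
    set F : ℝ → ENNReal := fun x => liminf (fun k => g k x) atTop with hF
    have hFmeas : Measurable F := Measurable.liminf hgmeas
    have hEsub : E ⊆ F ⁻¹' (Set.Ici 1) ∩ Set.Ioo 0 1 := fun x hx => ⟨hpoint x hx, hx.1⟩
    calc volume E ≤ volume (F ⁻¹' (Set.Ici 1) ∩ Set.Ioo 0 1) := measure_mono hEsub
      _ = μ (F ⁻¹' (Set.Ici 1)) := by
          rw [hμ, Measure.restrict_apply (hFmeas measurableSet_Ici)]
      _ = ∫⁻ _x in F ⁻¹' (Set.Ici 1), 1 ∂μ := (setLIntegral_one _).symm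
      _ ≤ ∫⁻ x in F ⁻¹' (Set.Ici 1), F x ∂μ :=
          setLIntegral_mono hFmeas (fun x hx => hx)
      _ ≤ ∫⁻ x, F x ∂μ := setLIntegral_le_lintegral _ _
      _ ≤ liminf (fun k => ∫⁻ x, g k x ∂μ) atTop := lintegral_liminf_le hgmeas
      _ ≤ liminf (fun _ : ℕ => 2 * ENNReal.ofReal ((4/9:ℝ)^m)) atTop :=
          liminf_le_liminf (Eventually.of_forall hgint)
      _ = 2 * ENNReal.ofReal ((4/9:ℝ)^m) := liminf_const _
  have htend : Tendsto (fun m : ℕ => 2 * ENNReal.ofReal ((4/9:ℝ)^m)) atTop (nhds 0) := by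
    have h1 : Tendsto (fun m : ℕ => ENNReal.ofReal ((4/9:ℝ)^m)) atTop (nhds 0) := by
      have h2 := ENNReal.tendsto_ofReal
        (tendsto_pow_atTop_nhds_zero_of_lt_one (by norm_num : (0:ℝ) ≤ 4/9)
          (by norm_num : (4/9:ℝ) < 1))
      simpa using h2
    have h3 := ENNReal.Tendsto.const_mul (a := 2) h1 (Or.inr ENNReal.ofNat_ne_top)
    simpa using h3
  exact le_antisymm (ge_of_tendsto' htend key) zero_le
end

section
/- Let f be a function from the irrational real numbers to the irrational real numbers satisfying the functional equations f(1/x) = 1/f(x), f(1 − x) = 1 − f(x), and f(−x) = −1/f(x) for every irrational x. Then for every matrix g = [[a,b],[c,d]] with a,b,c,d ∈ ℤ and ad − bc = ±1 there exists a matrix h = [[a',b'],[c',d']] with a',b',c',d' ∈ ℤ and a'd' − b'c' = ±1 such that f((a·x + b)/(c·x + d)) = (a'·f(x) + b')/(c'·f(x) + d') for every irrational x. -/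
/-- The Möbius transformation with integer coefficients. -/
noncomputable def moeb (a b c d : ℤ) (x : ℝ) : ℝ :=
  ((a : ℝ) * x + b) / ((c : ℝ) * x + d)

lemma denom_ne (c d : ℤ) (h : c ≠ 0 ∨ d ≠ 0) (x : ℝ) (hx : Irrational x) :
    (c : ℝ) * x + d ≠ 0 := by
  by_cases hc : c = 0
  · subst hc
    have hd : d ≠ 0 := h.resolve_left (by simp)
    simpa using (by exact_mod_cast hd : (d : ℝ) ≠ 0)
  · intro heq
    apply hx
    refine ⟨-(d : ℚ) / c, ?_⟩
    have hcR : (c : ℝ) ≠ 0 := by exact_mod_cast hc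
    push_cast
    rw [div_eq_iff hcR]
    linarith

lemma row_ne {a b c d : ℤ} (hdet : a * d - b * c = 1 ∨ a * d - b * c = -1) :
    c ≠ 0 ∨ d ≠ 0 := by
  by_contra h
  push_neg at h
  obtain ⟨h1, h2⟩ := h
  subst h1; subst h2
  simp at hdet

lemma moeb_irr (a b c d : ℤ) (hdet : a * d - b * c = 1 ∨ a * d - b * c = -1)
    (x : ℝ) (hx : Irrational x) : Irrational (moeb a b c d x) := by
  rintro ⟨q, hq⟩
  have hden : (c : ℝ) * x + d ≠ 0 := denom_ne c d (row_ne hdet) x hx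
  rw [moeb, eq_div_iff hden] at hq
  have e : ((a : ℝ) - q * c) * x = q * d - b := by linear_combination -hq
  by_cases h0 : (a : ℝ) - q * c = 0
  · have h1 : (q : ℝ) * d - b = 0 := by rw [h0, zero_mul] at e; exact e.symm
    have h2 : ((a * d - b * c : ℤ) : ℝ) = 0 := by
      push_cast
      linear_combination (d : ℝ) * h0 + (c : ℝ) * h1
    have : (a * d - b * c : ℤ) = 0 := by exact_mod_cast h2
    omega
  · apply hx
    refine ⟨(q * d - b) / (a - q * c), ?_⟩
    have h0' : ((a : ℚ) - q * c) ≠ 0 := by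
      intro h
      apply h0
      exact_mod_cast congrArg (fun t : ℚ => (t : ℝ)) h
    push_cast
    rw [div_eq_iff (by exact_mod_cast h0')]
    linear_combination -e

lemma moeb_comp (a b c d p q r s : ℤ)
    (hM : a * d - b * c = 1 ∨ a * d - b * c = -1)
    (hN : p * s - q * r = 1 ∨ p * s - q * r = -1)
    (x : ℝ) (hx : Irrational x) :
    moeb a b c d (moeb p q r s x)
      = moeb (a * p + b * r) (a * q + b * s) (c * p + d * r) (c * q + d * s) x := by
  have hden1 : (r : ℝ) * x + s ≠ 0 := denom_ne r s (row_ne hN) x hx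
  have hprod : (a * p + b * r) * (c * q + d * s) - (a * q + b * s) * (c * p + d * r)
      = (a * d - b * c) * (p * s - q * r) := by ring
  have hdetP : (a * p + b * r) * (c * q + d * s) - (a * q + b * s) * (c * p + d * r) = 1 ∨
      (a * p + b * r) * (c * q + d * s) - (a * q + b * s) * (c * p + d * r) = -1 := by
    rw [hprod]; rcases hM with h | h <;> rcases hN with h' | h' <;> simp [h, h']
  have hden2 : ((c * p + d * r : ℤ) : ℝ) * x + ((c * q + d * s : ℤ) : ℝ) ≠ 0 :=
    denom_ne _ _ (row_ne hdetP) x hx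
  simp only [moeb]
  have key : (c : ℝ) * ((↑p * x + ↑q) / (↑r * x + ↑s)) + d
      = (((c * p + d * r : ℤ) : ℝ) * x + ((c * q + d * s : ℤ) : ℝ)) / ((r : ℝ) * x + s) := by
    push_cast
    rw [eq_div_iff hden1]
    linear_combination (c : ℝ) * div_mul_cancel₀ ((p : ℝ) * x + q) hden1
  have hden3 : (c : ℝ) * ((↑p * x + ↑q) / (↑r * x + ↑s)) + d ≠ 0 := by
    rw [key]; exact div_ne_zero hden2 hden1
  rw [div_eq_div_iff hden3 hden2]
  push_cast
  linear_combination ((a : ℝ) * d - b * c) * div_mul_cancel₀ ((p : ℝ) * x + q) hden1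

/-- The equivariance property for a single matrix. -/
def JP (f : ℝ → ℝ) (a b c d : ℤ) : Prop :=
  ∃ a' b' c' d' : ℤ, (a' * d' - b' * c' = 1 ∨ a' * d' - b' * c' = -1) ∧
    ∀ x : ℝ, Irrational x → f (moeb a b c d x) = moeb a' b' c' d' (f x)

lemma JP_comp (f : ℝ → ℝ) (hIrr : ∀ x : ℝ, Irrational x → Irrational (f x))
    {a b c d p q r s : ℤ}
    (hM : a * d - b * c = 1 ∨ a * d - b * c = -1)
    (hN : p * s - q * r = 1 ∨ p * s - q * r = -1)
    (PM : JP f a b c d) (PN : JP f p q r s) :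
    JP f (a * p + b * r) (a * q + b * s) (c * p + d * r) (c * q + d * s) := by
  obtain ⟨a', b', c', d', hM', hfM⟩ := PM
  obtain ⟨p', q', r', s', hN', hfN⟩ := PN
  refine ⟨a' * p' + b' * r', a' * q' + b' * s', c' * p' + d' * r', c' * q' + d' * s', ?_, ?_⟩
  · have : (a' * p' + b' * r') * (c' * q' + d' * s') - (a' * q' + b' * s') * (c' * p' + d' * r')
        = (a' * d' - b' * c') * (p' * s' - q' * r') := by ring
    rw [this]
    rcases hM' with h | h <;> rcases hN' with h' | h' <;> simp [h, h']
  · intro x hx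
    have hNx : Irrational (moeb p q r s x) := moeb_irr p q r s hN x hx
    have hfx : Irrational (f x) := hIrr x hx
    rw [← moeb_comp a b c d p q r s hM hN x hx, hfM _ hNx, hfN x hx,
      moeb_comp a' b' c' d' p' q' r' s' hM' hN' (f x) hfx]

lemma JP_congr (f : ℝ → ℝ) {a b c d a2 b2 c2 d2 : ℤ}
    (h : ∀ x : ℝ, Irrational x → moeb a b c d x = moeb a2 b2 c2 d2 x)
    (hP : JP f a2 b2 c2 d2) : JP f a b c d := by
  obtain ⟨a', b', c', d', h1, h2⟩ := hP
  exact ⟨a', b', c', d', h1, fun x hx => by rw [h x hx]; exact h2 x hx⟩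

/-- A function on the irrationals, with irrational values, satisfying the three
functional equations `f(1/x) = 1/f(x)`, `f(1-x) = 1-f(x)` and `f(-x) = -1/f(x)`
is equivariant with the `PGL(2,ℤ)`-action: for every integer matrix `[[a,b],[c,d]]`
with `ad - bc = ±1` there is an integer matrix `[[a',b'],[c',d']]` with
`a'd' - b'c' = ±1` such that `f((ax+b)/(cx+d)) = (a'·f(x)+b')/(c'·f(x)+d')`
for every irrational `x`. -/
theorem jimm_equivariant (f : ℝ → ℝ)
    (hIrr : ∀ x : ℝ, Irrational x → Irrational (f x))
    (hinv : ∀ x : ℝ, Irrational x → f (1 / x) = 1 / f x)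
    (hrefl : ∀ x : ℝ, Irrational x → f (1 - x) = 1 - f x)
    (hneg : ∀ x : ℝ, Irrational x → f (-x) = -1 / f x)
    (a b c d : ℤ) (hdet : a * d - b * c = 1 ∨ a * d - b * c = -1) :
    ∃ a' b' c' d' : ℤ, (a' * d' - b' * c' = 1 ∨ a' * d' - b' * c' = -1) ∧
      ∀ x : ℝ, Irrational x →
        f (((a : ℝ) * x + b) / ((c : ℝ) * x + d))
          = ((a' : ℝ) * f x + b') / ((c' : ℝ) * f x + d') := by
  -- generators
  have hS : JP f 0 1 1 0 := by
    refine ⟨0, 1, 1, 0, by norm_num, fun x hx => ?_⟩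
    simp only [moeb]
    push_cast
    simpa [one_div] using hinv x hx
  have hV : JP f (-1) 0 0 1 := by
    refine ⟨0, -1, 1, 0, by norm_num, fun x hx => ?_⟩
    simp only [moeb]
    push_cast
    rw [show (-1 : ℝ) * x + 0 = -x by ring, show ((0:ℝ) * x + 1) = 1 by ring, div_one,
      hneg x hx]
    ring_nf
  have hU : JP f (-1) 1 0 1 := by
    refine ⟨-1, 1, 0, 1, by norm_num, fun x hx => ?_⟩
    simp only [moeb]
    push_cast
    rw [show ((0:ℝ) * x + 1) = 1 by ring, show ((0:ℝ) * f x + 1) = 1 by ring,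
      div_one, div_one, show (-1 : ℝ) * x + 1 = 1 - x by ring, hrefl x hx]
    ring
  have hid : JP f 1 0 0 1 := by
    refine ⟨1, 0, 0, 1, by norm_num, fun x hx => ?_⟩
    simp [moeb]
  -- translations
  have hT1 : JP f 1 1 0 1 := by
    have := JP_comp f hIrr (a := -1) (b := 1) (c := 0) (d := 1)
      (p := -1) (q := 0) (r := 0) (s := 1) (by norm_num) (by norm_num) hU hV
    norm_num at this
    exact this
  have hTm1 : JP f 1 (-1) 0 1 := by
    have := JP_comp f hIrr (a := -1) (b := 0) (c := 0) (d := 1)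
      (p := -1) (q := 1) (r := 0) (s := 1) (by norm_num) (by norm_num) hV hU
    norm_num at this
    exact this
  have hT : ∀ q : ℤ, JP f 1 q 0 1 := by
    intro q
    induction q using Int.induction_on with
    | zero => exact hid
    | succ k ih =>
      have := JP_comp f hIrr (a := 1) (b := 1) (c := 0) (d := 1)
        (p := 1) (q := (k : ℤ)) (r := 0) (s := 1) (by norm_num) (by norm_num) hT1 ih
      simpa using this
    | pred k ih =>
      have := JP_comp f hIrr (a := 1) (b := -1) (c := 0) (d := 1)
        (p := 1) (q := (-k : ℤ)) (r := 0) (s := 1) (by norm_num) (by norm_num) hTm1 ih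
      have e : (1 * -(k : ℤ) + -1 * 1 : ℤ) = -(k + 1) := by ring
      simpa [e, sub_eq_add_neg] using this
  -- main induction on |c|
  have main : ∀ n : ℕ, ∀ a b c d : ℤ, c.natAbs = n →
      (a * d - b * c = 1 ∨ a * d - b * c = -1) → JP f a b c d := by
    intro n
    induction n using Nat.strong_induction_on with
    | _ n ih =>
      intro a b c d hc hdet
      by_cases hc0 : c = 0
      · subst hc0
        have had : a * d = 1 ∨ a * d = -1 := by omega
        rcases had with had | had
        · rcases Int.mul_eq_one_iff_eq_one_or_neg_one.mp had with ⟨ha, hd⟩ | ⟨ha, hd⟩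
          · subst ha; subst hd; exact hT b
          · subst ha; subst hd
            refine JP_congr f (a2 := 1) (b2 := -b) (c2 := 0) (d2 := 1) ?_ (hT (-b))
            intro x hx
            simp only [moeb]
            push_cast
            rw [div_eq_div_iff (by norm_num) (by norm_num)]
            ring
        · have had' : a * (-d) = 1 := by rw [mul_neg]; omega
          rcases Int.mul_eq_one_iff_eq_one_or_neg_one.mp had' with ⟨ha, hd⟩ | ⟨ha, hd⟩
          · have ha1 : a = 1 := ha
            have hd1 : d = -1 := by omega
            subst ha1; subst hd1
            have comp := JP_comp f hIrr (a := -1) (b := 0) (c := 0) (d := 1)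
              (p := 1) (q := b) (r := 0) (s := 1) (by norm_num) (by norm_num) hV (hT b)
            refine JP_congr f (a2 := -1) (b2 := -b) (c2 := 0) (d2 := 1) ?_
              (by simpa using comp)
            intro x hx
            simp only [moeb]
            push_cast
            rw [div_eq_div_iff (by norm_num) (by norm_num)]
            ring
          · have ha1 : a = -1 := ha
            have hd1 : d = 1 := by omega
            subst ha1; subst hd1
            have comp := JP_comp f hIrr (a := -1) (b := 0) (c := 0) (d := 1)
              (p := 1) (q := -b) (r := 0) (s := 1) (by norm_num) (by norm_num) hV (hT (-b))
            simpa using comp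
      · -- c ≠ 0 : Euclidean step
        set q := a / c with hq
        set r := a % c with hr
        have hacr : a = c * q + r := by rw [hq, hr]; exact (Int.mul_ediv_add_emod a c).symm
        have h1 : 0 ≤ r := by rw [hr]; exact Int.emod_nonneg a hc0
        have h2 : r < c ∨ r < -c := by
          rcases lt_or_gt_of_ne hc0 with h | h
          · right
            have : a % (-c) < -c := Int.emod_lt_of_pos a (by omega)
            rw [hr]; simpa using this
          · left; rw [hr]; exact Int.emod_lt_of_pos a h
        have hrlt : r.natAbs < n := by rw [← hc]; omega
        have hdetM'' : c * (b - q * d) - d * r = 1 ∨ c * (b - q * d) - d * r = -1 := by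
          have h3 : c * (b - q * d) - d * r = -(a * d - b * c) := by rw [hacr]; ring
          rcases hdet with h | h <;> [right; left] <;> rw [h3, h] <;> ring
        have hM'' : JP f c d r (b - q * d) := ih r.natAbs hrlt c d r (b - q * d) rfl hdetM''
        have hSM'' : JP f r (b - q * d) c d := by
          have comp := JP_comp f hIrr (a := 0) (b := 1) (c := 1) (d := 0)
            (p := c) (q := d) (r := r) (s := b - q * d) (by norm_num) hdetM'' hS hM''
          simpa using comp
        have hdetSM'' : r * d - (b - q * d) * c = 1 ∨ r * d - (b - q * d) * c = -1 := by
          have h3 : r * d - (b - q * d) * c = a * d - b * c := by rw [hacr]; ring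
          rcases hdet with h | h <;> [left; right] <;> rw [h3, h]
        have comp := JP_comp f hIrr (a := 1) (b := q) (c := 0) (d := 1)
          (p := r) (q := b - q * d) (r := c) (s := d) (by norm_num) hdetSM'' (hT q) hSM''
        have e1 : (1 * r + q * c : ℤ) = a := by rw [hacr]; ring
        have e2 : (1 * (b - q * d) + q * d : ℤ) = b := by ring
        have e3 : (0 * r + 1 * c : ℤ) = c := by ring
        have e4 : (0 * (b - q * d) + 1 * d : ℤ) = d := by ring
        rw [e1, e2, e3, e4] at comp
        exact comp
  obtain ⟨a', b', c', d', h1, h2⟩ := main c.natAbs a b c d rfl hdet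
  exact ⟨a', b', c', d', h1, fun x hx => h2 x hx⟩
end

section
/- Let (n_i)_{i≥1} be a sequence of integers with n_i ≥ 2 for all i, and let W be its J-word. Then (n_i) is eventually periodic if and only if W is eventually periodic. -/
/-- A sequence `s` (indexed from 1) is eventually periodic if there are `N ≥ 1` and
`p ≥ 1` with `s (i + p) = s i` for all `i ≥ N`. -/
def EventuallyPeriodic {α : Type*} (s : ℕ → α) : Prop :=
  ∃ N p : ℕ, 1 ≤ N ∧ 1 ≤ p ∧ ∀ i : ℕ, N ≤ i → s (i + p) = s i
namespace JWaux

def S (n : ℕ → ℤ) (k : ℕ) : ℤ := (∑ i ∈ Finset.Icc 1 k, n i) - ((k : ℤ) - 1)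

lemma S_zero (n : ℕ → ℤ) : S n 0 = 1 := by simp [S]

lemma S_succ (n : ℕ → ℤ) (k : ℕ) : S n (k + 1) = S n k + n (k + 1) - 1 := by
  unfold S
  rw [Finset.sum_Icc_succ_top (by omega : 1 ≤ k + 1)]
  push_cast; ring

lemma S_mono {n : ℕ → ℤ} (hn : ∀ i : ℕ, 1 ≤ i → 2 ≤ n i) : StrictMono (S n) := by
  apply strictMono_nat_of_lt_succ
  intro k
  have h := hn (k + 1) (by omega)
  rw [S_succ]; linarith

lemma S_ge {n : ℕ → ℤ} (hn : ∀ i : ℕ, 1 ≤ i → 2 ≤ n i) : ∀ k : ℕ, (k : ℤ) + 1 ≤ S n k := by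
  intro k; induction k with
  | zero => simp [S_zero]
  | succ k ih =>
      have h := hn (k + 1) (by omega)
      rw [S_succ]; push_cast; linarith

lemma S_add_le {n : ℕ → ℤ} (hn : ∀ i : ℕ, 1 ≤ i → 2 ≤ n i) :
    ∀ k p : ℕ, S n k + p ≤ S n (k + p) := by
  intro k p; induction p with
  | zero => simp
  | succ p ih =>
      have h := hn (k + p + 1) (by omega)
      have e : k + (p + 1) = (k + p) + 1 := by ring
      rw [e, S_succ]; push_cast; push_cast at ih; linarith

end JWaux

/-- A sequence of integers `≥ 2` is eventually periodic if and only if its J-word is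
eventually periodic. -/
theorem jword_eventuallyPeriodic_iff (n : ℕ → ℤ) (hn : ∀ i : ℕ, 1 ≤ i → 2 ≤ n i)
    (W : ℕ → ℕ) (hW : IsJWord n W) :
    EventuallyPeriodic n ↔ EventuallyPeriodic W := by
  have hW' : ∀ j : ℕ, 1 ≤ j →
      ((∃ k : ℕ, 1 ≤ k ∧ (j : ℤ) = JWaux.S n k) → W j = 2) ∧
      ((¬ ∃ k : ℕ, 1 ≤ k ∧ (j : ℤ) = JWaux.S n k) → W j = 1) := hW
  have hW2 : ∀ j : ℕ, 1 ≤ j → (W j = 2 ↔ ∃ k : ℕ, 1 ≤ k ∧ (j : ℤ) = JWaux.S n k) := by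
    intro j hj
    obtain ⟨h2, h1⟩ := hW' j hj
    constructor
    · intro h
      by_contra hc
      have := h1 hc
      omega
    · exact h2
  have hmono := JWaux.S_mono hn
  have hge := JWaux.S_ge hn
  constructor
  · -- n eventually periodic → W eventually periodic
    rintro ⟨N0, p, hN0, hp, hper0⟩
    set N := N0 + 1 with hNdef
    have hper : ∀ i : ℕ, N ≤ i → n (i + p) = n i := fun i hi => hper0 i (by omega)
    set M := N0 with hMdef  -- M = N - 1, M ≥ 1
    have hM1 : 1 ≤ M := hN0
    set Qz : ℤ := JWaux.S n (M + p) - JWaux.S n M with hQzdef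
    have hQk : ∀ d : ℕ, JWaux.S n (M + d + p) = JWaux.S n (M + d) + Qz := by
      intro d
      induction d with
      | zero => simp [hQzdef]
      | succ d ih =>
          have e1 : M + (d + 1) + p = (M + d + p) + 1 := by ring
          have e2 : M + (d + 1) = (M + d) + 1 := by ring
          rw [e1, JWaux.S_succ, e2, JWaux.S_succ]
          have hn' : n (M + d + p + 1) = n (M + d + 1) := by
            have := hper (M + d + 1) (by omega)
            have e3 : M + d + 1 + p = M + d + p + 1 := by ring
            rw [e3] at this
            exact this
          rw [hn', ih]
          ring
    have hQzp : (p : ℤ) ≤ Qz := by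
      have := JWaux.S_add_le hn M p
      simp [hQzdef]; linarith
    have hQz1 : 1 ≤ Qz := by
      have : (1 : ℤ) ≤ (p : ℤ) := by exact_mod_cast hp
      linarith
    set Q : ℕ := Qz.toNat with hQdef
    have hQcast : (Q : ℤ) = Qz := Int.toNat_of_nonneg (by linarith)
    have hQ1 : 1 ≤ Q := by omega
    set A : ℕ := (JWaux.S n M).toNat with hAdef
    have hSMpos : (1 : ℤ) ≤ JWaux.S n M := by have := hge M; push_cast at this ⊢; omega
    have hAcast : (A : ℤ) = JWaux.S n M := Int.toNat_of_nonneg (by linarith)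
    have hA1 : 1 ≤ A := by
      have := hge M
      omega
    refine ⟨A, Q, hA1, hQ1, ?_⟩
    intro j hj
    have hj1 : 1 ≤ j := le_trans hA1 hj
    have hjz : JWaux.S n M ≤ (j : ℤ) := by
      rw [← hAcast]; exact_mod_cast hj
    by_cases h : ∃ k : ℕ, 1 ≤ k ∧ (j : ℤ) = JWaux.S n k
    · obtain ⟨k, hk1, hkS⟩ := h
      have hkM : M ≤ k := by
        by_contra hc
        push_neg at hc
        have := hmono hc
        omega
      have hnew : ((j + Q : ℕ) : ℤ) = JWaux.S n (k + p) := by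
        obtain ⟨d, hd⟩ := Nat.exists_eq_add_of_le hkM
        have := hQk d
        rw [← hd] at this
        push_cast
        omega
      have h2a := (hW2 (j + Q) (by omega)).mpr ⟨k + p, by omega, hnew⟩
      have h2b := (hW2 j hj1).mpr ⟨k, hk1, hkS⟩
      omega
    · have hnot : ¬ ∃ k : ℕ, 1 ≤ k ∧ ((j + Q : ℕ) : ℤ) = JWaux.S n k := by
        rintro ⟨k', hk'1, hk'S⟩
        have hbig : JWaux.S n (M + p) ≤ (↑(j + Q) : ℤ) := by
          have := hQk 0
          push_cast
          omega
        have hk'Mp : M + p ≤ k' := by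
          by_contra hc
          push_neg at hc
          have := hmono hc
          omega
        obtain ⟨d, hd⟩ := Nat.exists_eq_add_of_le hk'Mp
        have hQd := hQk d
        have hk0 : k' = (M + d) + p := by omega
        rw [hk0] at hk'S
        apply h
        refine ⟨M + d, by omega, ?_⟩
        push_cast at hk'S
        omega
      have h1a := (hW' (j + Q) (by omega)).2 hnot
      have h1b := (hW' j hj1).2 h
      omega
  · -- W eventually periodic → n eventually periodic
    rintro ⟨N, p, hN, hp, hper⟩
    have hiff : ∀ j : ℕ, N ≤ j →
        ((∃ k : ℕ, 1 ≤ k ∧ (j : ℤ) = JWaux.S n k) ↔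
         (∃ k : ℕ, 1 ≤ k ∧ ((j : ℤ) + (p : ℤ)) = JWaux.S n k)) := by
      intro j hj
      have hj1 : 1 ≤ j := le_trans hN hj
      have hWeq : W (j + p) = W j := hper j hj
      have e : ((j + p : ℕ) : ℤ) = (j : ℤ) + (p : ℤ) := by push_cast; ring
      rw [← e]
      rw [← hW2 j hj1, ← hW2 (j + p) (by omega), hWeq]
    -- for each k ≥ N, S k + p is a 2-position
    have hex : ∀ k : ℕ, N ≤ k → ∃ k' : ℕ, 1 ≤ k' ∧ JWaux.S n k + (p : ℤ) = JWaux.S n k' := by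
      intro k hk
      have hSk := hge k
      set j : ℕ := (JWaux.S n k).toNat with hjdef
      have hjcast : (j : ℤ) = JWaux.S n k := Int.toNat_of_nonneg (by linarith)
      have hjN : N ≤ j := by omega
      have := (hiff j hjN).mp ⟨k, by omega, hjcast⟩
      rw [hjcast] at this
      exact this
    obtain ⟨k1, hk11, hk1S⟩ := hex N (le_refl N)
    have hk1gt : N < k1 := by
      have : JWaux.S n N < JWaux.S n k1 := by
        have : (0 : ℤ) < (p : ℤ) := by exact_mod_cast hp
        linarith
      exact hmono.lt_iff_lt.mp this
    set q : ℕ := k1 - N with hqdef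
    have hq1 : 1 ≤ q := by omega
    have hmain : ∀ d : ℕ, JWaux.S n (N + d + q) = JWaux.S n (N + d) + (p : ℤ) := by
      intro d
      induction d with
      | zero =>
          have e : N + 0 + q = k1 := by omega
          rw [e]
          simpa using hk1S.symm
      | succ d ih =>
          obtain ⟨k'', hk''1, hk''S⟩ := hex (N + d + 1) (by omega)
          have hgt : N + d + q < k'' := by
            have h1 : JWaux.S n (N + d) < JWaux.S n (N + d + 1) := hmono (by omega)
            have h2 : JWaux.S n (N + d + q) < JWaux.S n k'' := by linarith
            exact hmono.lt_iff_lt.mp h2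
          have heq : k'' = N + d + q + 1 := by
            by_contra hc
            have hge2 : N + d + q + 2 ≤ k'' := by omega
            -- middle 2-position m = S (N+d+q+1)
            set m : ℤ := JWaux.S n (N + d + q + 1) with hmdef
            have hm1 : JWaux.S n (N + d + q) < m := hmono (by omega)
            have hm2 : m < JWaux.S n k'' := hmono (by omega)
            have hSNd := hge (N + d)
            set j0 : ℕ := (m - (p : ℤ)).toNat with hj0def
            have hj0cast : (j0 : ℤ) = m - (p : ℤ) := by
              apply Int.toNat_of_nonneg
              push_cast at hSNd
              omega
            have hj0N : N ≤ j0 := by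
              push_cast at hSNd
              omega
            have hj0ex : ∃ k : ℕ, 1 ≤ k ∧ (j0 : ℤ) = JWaux.S n k := by
              apply (hiff j0 hj0N).mpr
              exact ⟨N + d + q + 1, by omega, by rw [hj0cast]; ring⟩
            obtain ⟨k3, hk31, hk3S⟩ := hj0ex
            have hlow : JWaux.S n (N + d) < JWaux.S n k3 := by
              rw [← hk3S, hj0cast]; linarith
            have hhigh : JWaux.S n k3 < JWaux.S n (N + d + 1) := by
              rw [← hk3S, hj0cast]; linarith
            have := hmono.lt_iff_lt.mp hlow
            have := hmono.lt_iff_lt.mp hhigh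
            omega
          rw [show N + (d + 1) + q = k'' from by omega]
          exact hk''S.symm
    refine ⟨N + 1, q, by omega, hq1, ?_⟩
    intro i hi
    obtain ⟨d, hd⟩ := Nat.exists_eq_add_of_le hi
    -- i = N + 1 + d
    have h1 := hmain d
    have h2 := hmain (d + 1)
    have e1 : N + d + q + 1 = N + (d + 1) + q := by ring
    have e2 : N + d + 1 = N + (d + 1) := by ring
    have s1 := JWaux.S_succ n (N + d + q)
    have s2 := JWaux.S_succ n (N + d)
    rw [e1] at s1
    rw [e2] at s2
    have hni : n (N + (d + 1) + q) = n (N + (d + 1)) := by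
      rw [h1, h2] at s1
      linarith [s1, s2]
    have e3 : i + q = N + (d + 1) + q := by omega
    have e4 : i = N + (d + 1) := by omega
    rw [e3, e4]
    exact hni
end
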